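/- arXiv:2004.02716 — 7 statements merged into one kernel-verified Lean document; each statement's English description precedes it below -/
import Mathlib

section
/- Let X be a locally compact metric space and φ a free flow on X. Then for every point x ∈ X there exists a sequence of flowboxes {B_n}_{n∈ℕ} with nonempty interior, with central slices {S_n} and lengths {l_n}, such that: (i) S_n ⊆ S_{n−1} ∩ int(B_{n−1}) for every n ≥ 1; (ii) for every L > 0 there exists N ∈ ℕ such that l_n > L for every n > N; (iii) S_n is contained in the open ball of radius 1/n around x, for every n ≥ 1; (iv) for every n ∈ ℕ and every 0 < l ≤ l_n, the flowbox φ(S_n × [−l/2, +l/2]) has nonempty interior; (v) for every n ∈ ℕ and every 0 < η < l_n/2 there exists k > n such that whenever L₁ ≤ L₂ are real numbers with −l_n/2 < L₁ − η and L₂ + η < l_n/2, one has φ(S_k × [L₁, L₂]) ⊆ int(φ(S_n × [L₁ − η, L₂ + η])). -/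
open Set

/-- A flow is *free* if it has no periodic points. -/
def Flow.IsFree {X : Type*} [TopologicalSpace X] (φ : Flow ℝ X) : Prop :=
  ∀ (x : X) (t : ℝ), φ t x = x → t = 0

/-- A flow is *minimal* if the forward orbit of every point is dense. -/
def Flow.IsMinimal {X : Type*} [TopologicalSpace X] (φ : Flow ℝ X) : Prop :=
  ∀ x : X, Dense {y : X | ∃ t : ℝ, 0 ≤ t ∧ φ t x = y}

/-- `B` is a flowbox of length `l` for the flow `φ`. -/
def IsFlowbox {X : Type*} [TopologicalSpace X] (φ : Flow ℝ X) (B : Set X) (l : ℝ) : Prop :=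
  IsCompact B ∧ 0 < l ∧
    ∀ x ∈ B, ∃ am ap ε : ℝ, am ≤ 0 ∧ 0 ≤ ap ∧ 0 < ε ∧ l = ap - am ∧
      (∀ t ∈ Set.Icc am ap, φ t x ∈ B) ∧
      (∀ t ∈ Set.Ioo (am - ε) am ∪ Set.Ioo ap (ap + ε), φ t x ∉ B)

/-- The central slice of a flowbox: the points whose visit interval is symmetric. -/
def centralSlice {X : Type*} [TopologicalSpace X] (φ : Flow ℝ X) (B : Set X) : Set X :=
  {x ∈ B | ∃ a : ℝ, 0 ≤ a ∧ (∀ t ∈ Set.Icc (-a) a, φ t x ∈ B) ∧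
    ∃ ε : ℝ, 0 < ε ∧ ∀ t ∈ Set.Ioo (-a - ε) (-a) ∪ Set.Ioo a (a + ε), φ t x ∉ B}

/-- `φ(S × I)`, the tube obtained flowing the set `S` along the times in `I`. -/
def flowTube {X : Type*} [TopologicalSpace X] (φ : Flow ℝ X) (S : Set X) (I : Set ℝ) : Set X :=
  {x | ∃ y ∈ S, ∃ t ∈ I, φ t y = x}

/-- First arrive time `τ_S(x) = min {t > 0 | φ_t(x) ∈ S}`. -/
noncomputable def firstArriveTime {X : Type*} [TopologicalSpace X] (φ : Flow ℝ X)
    (S : Set X) (x : X) : ℝ :=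
  sInf {t : ℝ | 0 < t ∧ φ t x ∈ S}

/-- First return map `Φ_S(x) = φ_{τ_S(x)}(x)`. -/
noncomputable def firstReturnMap {X : Type*} [TopologicalSpace X] (φ : Flow ℝ X)
    (S : Set X) (x : X) : X :=
  φ (firstArriveTime φ S x) x

/-- `S` is a clopen subset of `C` (in the subspace topology of `C`). -/
def IsClopenIn {X : Type*} [TopologicalSpace X] (S C : Set X) : Prop :=
  (∃ U : Set X, IsOpen U ∧ S = U ∩ C) ∧ (∃ F : Set X, IsClosed F ∧ S = F ∩ C)

open Metric


/-- Tube lemma specialization. -/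
lemma flowbox_tube_aux {X : Type*} [TopologicalSpace X] {F : ℝ × X → ℝ} (hF : Continuous F)
    {C : Set ℝ} (hC : IsCompact C) {O : Set ℝ} (hO : IsOpen O) (x : X)
    (hx : ∀ t ∈ C, F (t, x) ∈ O) :
    ∃ V : Set X, IsOpen V ∧ x ∈ V ∧ ∀ y ∈ V, ∀ t ∈ C, F (t, y) ∈ O := by
  have hsub : C ×ˢ ({x} : Set X) ⊆ F ⁻¹' O := by
    rintro ⟨t, y⟩ ⟨ht, hy⟩
    simp only [mem_singleton_iff] at hy
    subst hy; exact hx t ht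
  obtain ⟨u, v, hu, hv, hCu, hxv, huv⟩ :=
    generalized_tube_lemma hC isCompact_singleton (hO.preimage hF) hsub
  exact ⟨v, hv, hxv rfl, fun y hy t ht => huv ⟨hCu ht, hy⟩⟩

lemma flowbox_ball_aux {X : Type*} [MetricSpace X] {x : X} {U : Set X} (hU : U ∈ nhds x)
    {e : ℝ} (he : 0 < e) : ∃ r : ℝ, 0 < r ∧ r ≤ e ∧ closedBall x r ⊆ U := by
  obtain ⟨ε, hε, hsub⟩ := Metric.nhds_basis_closedBall.mem_iff.mp hU
  refine ⟨min ε e, lt_min hε he, min_le_right _ _,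
    (closedBall_subset_closedBall (min_le_left _ _)).trans hsub⟩

/-- Near a non-periodic point there is a continuous function strictly decreasing
along the flow, at unit rate `δ`, for times in `[-ρ, ρ]`, on a neighborhood `W`. -/
lemma flowbox_monotone_aux {X : Type*} [MetricSpace X] (φ : Flow ℝ X)
    (hfree : ∀ (y : X) (t : ℝ), φ t y = y → t = 0) (x : X) :
    ∃ (h : X → ℝ) (δ ρ : ℝ) (W : Set X), Continuous h ∧ 0 < δ ∧ 0 < ρ ∧ ρ ≤ 1/2 ∧
      IsOpen W ∧ x ∈ W ∧
      ∀ y ∈ W, ∀ s t : ℝ, -ρ ≤ s → s ≤ t → t ≤ ρ →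
        h (φ t y) + δ * (t - s) ≤ h (φ s y) := by
  -- minimum distance of the orbit over times in [1/2, 2]
  obtain ⟨t₀, ht₀, hmin⟩ := (isCompact_Icc (a := (1/2:ℝ)) (b := 2)).exists_isMinOn
    (f := fun t => dist (φ t x) x) ⟨1, by rw [Set.mem_Icc]; norm_num⟩
    ((continuous_dist.comp ((φ.continuous continuous_id continuous_const).prodMk
      continuous_const)).continuousOn)
  set m₁ : ℝ := dist (φ t₀ x) x with hm₁def
  have hm₁pos : 0 < m₁ := by
    rw [hm₁def, dist_pos]
    intro he
    have := hfree x t₀ he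
    rw [this] at ht₀
    exact absurd ht₀.1 (by norm_num)
  have hm₁ : ∀ τ ∈ Icc (1/2 : ℝ) 2, m₁ ≤ dist (φ τ x) x := fun τ hτ => hmin hτ
  set δ : ℝ := m₁ / 2 with hδdef
  have hδpos : 0 < δ := by positivity
  -- small time window ρ where the orbit of x stays δ/4-close to x
  have hcont0 : ContinuousAt (fun t : ℝ => dist (φ t x) x) 0 :=
    (continuous_dist.comp ((φ.continuous continuous_id continuous_const).prodMk
      continuous_const)).continuousAt
  have h0 : dist (φ (0:ℝ) x) x < δ/4 := by
    rw [φ.map_zero_apply, dist_self]; positivity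
  obtain ⟨ρ₀, hρ₀pos, hρ₀⟩ := Metric.eventually_nhds_iff.mp (hcont0.eventually_lt
    continuousAt_const h0)
  set ρ : ℝ := min (ρ₀ / 2) (1/2) with hρdef
  have hρpos : 0 < ρ := lt_min (by positivity) (by norm_num)
  have hρhalf : ρ ≤ 1/2 := min_le_right _ _
  have hρsmall : ∀ τ : ℝ, |τ| ≤ ρ → dist (φ τ x) x < δ/4 := by
    intro τ hτ
    apply hρ₀
    rw [Real.dist_eq, sub_zero]
    calc |τ| ≤ ρ := hτ
    _ ≤ ρ₀/2 := min_le_left _ _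
    _ < ρ₀ := by linarith
  -- neighborhood W where the flow stays δ/4-close to the orbit of x for t ∈ [-ρ, 1+ρ]
  obtain ⟨W, hWopen, hxW, hW⟩ := flowbox_tube_aux
    (F := fun p : ℝ × X => dist (φ p.1 p.2) (φ p.1 x))
    (continuous_dist.comp ((φ.continuous continuous_fst continuous_snd).prodMk
      (φ.continuous continuous_fst continuous_const)))
    (isCompact_Icc (a := -ρ) (b := 1+ρ)) (isOpen_Iio (a := δ/4)) x
    (fun t _ => by simp only [mem_Iio, dist_self]; positivity)
  simp only [mem_Iio] at hW
  -- the bump function and its flow-integral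
  set u : X → ℝ := fun y => max 0 (δ - dist y x) with hudef
  have hu : Continuous u := continuous_const.max
    (continuous_const.sub (continuous_id.dist continuous_const))
  set h : X → ℝ := fun y => ∫ τ in (0:ℝ)..1, u (φ τ y) with hhdef
  have hh : Continuous h := by
    have hcc : Continuous (Function.uncurry fun (y : X) (t : ℝ) => u (φ t y)) :=
      hu.comp (φ.continuous continuous_snd continuous_fst)
    exact intervalIntegral.continuous_parametric_intervalIntegral_of_continuous' hcc 0 1
  have hshift : ∀ (y : X) (t : ℝ), h (φ t y) = ∫ τ in t..(1+t), u (φ τ y) := by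
    intro y t
    have e1 : h (φ t y) = ∫ τ in (0:ℝ)..1, u (φ (τ + t) y) := by
      apply intervalIntegral.integral_congr
      intro τ _
      show u (φ τ (φ t y)) = u (φ (τ + t) y)
      exact congrArg u (φ.map_add τ t y).symm
    rw [e1, intervalIntegral.integral_comp_add_right (fun τ => u (φ τ y)) t, zero_add]
  refine ⟨h, δ/4, ρ, W, hh, by positivity, hρpos, hρhalf, hWopen, hxW, ?_⟩
  intro y hyW s t hs hst ht
  have hint : ∀ a b : ℝ, IntervalIntegrable (fun τ => u (φ τ y)) MeasureTheory.volume a b :=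
    fun a b => ((hu.comp (φ.continuous continuous_id continuous_const)).intervalIntegrable a b)
  have e1 : h (φ s y) = (∫ τ in s..t, u (φ τ y)) + ∫ τ in t..(1+s), u (φ τ y) := by
    rw [hshift, ← intervalIntegral.integral_add_adjacent_intervals (hint s t) (hint t (1+s))]
  have e2 : h (φ t y) = (∫ τ in t..(1+s), u (φ τ y)) + ∫ τ in (1+s)..(1+t), u (φ τ y) := by
    rw [hshift, ← intervalIntegral.integral_add_adjacent_intervals (hint t (1+s))
      (hint (1+s) (1+t))]
  have hdisty : ∀ τ : ℝ, -ρ ≤ τ → τ ≤ 1+ρ → dist (φ τ y) (φ τ x) < δ/4 :=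
    fun τ h1 h2 => hW y hyW τ ⟨h1, h2⟩
  have hlow : δ/2 * (t - s) ≤ ∫ τ in s..t, u (φ τ y) := by
    have hmono2 : ∀ τ ∈ Icc s t, δ/2 ≤ u (φ τ y) := by
      intro τ hτ
      have hτ1 : -ρ ≤ τ := le_trans hs hτ.1
      have hτ2 : τ ≤ ρ := le_trans hτ.2 ht
      have h1 : dist (φ τ y) (φ τ x) < δ/4 := hdisty τ hτ1 (by linarith)
      have h2 : dist (φ τ x) x < δ/4 := hρsmall τ (abs_le.mpr ⟨hτ1, hτ2⟩)
      have h3 : dist (φ τ y) x < δ/2 :=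
        lt_of_le_of_lt (dist_triangle (φ τ y) (φ τ x) x) (by linarith)
      calc δ/2 ≤ δ - dist (φ τ y) x := by linarith
      _ ≤ u (φ τ y) := le_max_right _ _
    calc δ/2 * (t-s) = ∫ _ in s..t, δ/2 := by
          rw [intervalIntegral.integral_const, smul_eq_mul, mul_comm]
    _ ≤ ∫ τ in s..t, u (φ τ y) := by
          apply intervalIntegral.integral_mono_on hst intervalIntegrable_const (hint s t) hmono2
  have hzero : (∫ τ in (1+s)..(1+t), u (φ τ y)) = 0 := by
    have heq : EqOn (fun τ => u (φ τ y)) 0 (uIcc (1+s) (1+t)) := by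
      intro τ hτ
      rw [uIcc_of_le (by linarith)] at hτ
      have hτ1 : (1:ℝ)/2 ≤ τ := by
        have := hτ.1; linarith [hρhalf, hs]
      have hτ2 : τ ≤ 2 := by
        have := hτ.2; linarith [hρhalf, ht]
      have h1 : dist (φ τ y) (φ τ x) < δ/4 := hdisty τ (by linarith) (by linarith [hτ.2, ht])
      have h2 : m₁ ≤ dist (φ τ x) x := hm₁ τ ⟨hτ1, hτ2⟩
      have h3 : δ ≤ dist (φ τ y) x := by
        have htri : dist (φ τ x) x ≤ dist (φ τ x) (φ τ y) + dist (φ τ y) x := dist_triangle _ _ _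
        rw [dist_comm (φ τ x) (φ τ y)] at htri
        have : m₁ = 2 * δ := by rw [hδdef]; ring
        linarith
      show max 0 (δ - dist (φ τ y) x) = 0
      exact max_eq_left (by linarith)
    rw [intervalIntegral.integral_congr heq]; simp
  have h4 : (0:ℝ) ≤ δ/4 * (t - s) := by
    have : (0:ℝ) ≤ t - s := by linarith
    positivity
  nlinarith [hlow, e1, e2, hzero]


lemma flowbox_tube_aux' {X : Type*} [TopologicalSpace X] {F : ℝ × X → ℝ} (hF : Continuous F)
    {C : Set ℝ} (hC : IsCompact C) {O : Set ℝ} (hO : IsOpen O) (x : X)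
    (hx : ∀ t ∈ C, F (t, x) ∈ O) :
    ∃ V : Set X, IsOpen V ∧ x ∈ V ∧ ∀ y ∈ V, ∀ t ∈ C, F (t, y) ∈ O := by
  have hsub : C ×ˢ ({x} : Set X) ⊆ F ⁻¹' O := by
    rintro ⟨t, y⟩ ⟨ht, hy⟩
    simp only [mem_singleton_iff] at hy
    subst hy; exact hx t ht
  obtain ⟨u, v, hu, hv, hCu, hxv, huv⟩ :=
    generalized_tube_lemma hC isCompact_singleton (hO.preimage hF) hsub
  exact ⟨v, hv, hxv rfl, fun y hy t ht => huv ⟨hCu ht, hy⟩⟩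

/-- Covering lemma: points near `x` can be flowed, in small time, onto the local section
`{h = h x} ∩ closedBall x r`. -/
lemma flowbox_cover_aux {X : Type*} [MetricSpace X] (φ : Flow ℝ X) (x : X)
    (h : X → ℝ) (δ ρ : ℝ) (W : Set X) (hh : Continuous h) (hδ : 0 < δ)
    (hxW : x ∈ W)
    (hmono : ∀ y ∈ W, ∀ s t : ℝ, -ρ ≤ s → s ≤ t → t ≤ ρ →
      h (φ t y) + δ * (t - s) ≤ h (φ s y)) :
    ∀ r a : ℝ, ∃ V : Set X, IsOpen V ∧ x ∈ V ∧ (0 < r → 0 < a → a ≤ ρ →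
      ∀ y ∈ V, ∃ t : ℝ, |t| ≤ a ∧ dist (φ t y) x ≤ r ∧ h (φ t y) = h x) := by
  intro r a
  by_cases hgood : 0 < r ∧ 0 < a ∧ a ≤ ρ
  swap
  · exact ⟨univ, isOpen_univ, mem_univ x, fun h1 h2 h3 => absurd ⟨h1, h2, h3⟩ hgood⟩
  obtain ⟨hr, ha, haρ⟩ := hgood
  have hρpos : 0 < ρ := lt_of_lt_of_le ha haρ
  -- choose b ≤ a with orbit of x within r/2 for |t| ≤ b
  have hcont0 : ContinuousAt (fun t : ℝ => dist (φ t x) x) 0 :=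
    (continuous_dist.comp ((φ.continuous continuous_id continuous_const).prodMk
      continuous_const)).continuousAt
  have h0 : dist (φ (0:ℝ) x) x < r/2 := by
    rw [φ.map_zero_apply, dist_self]; positivity
  obtain ⟨ε₀, hε₀pos, hε₀⟩ := Metric.eventually_nhds_iff.mp (hcont0.eventually_lt
    continuousAt_const h0)
  set b : ℝ := min a (ε₀/2) with hbdef
  have hbpos : 0 < b := lt_min ha (by positivity)
  have hba : b ≤ a := min_le_left _ _
  have hbρ : b ≤ ρ := le_trans hba haρ
  have hbsmall : ∀ τ : ℝ, |τ| ≤ b → dist (φ τ x) x < r/2 := by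
    intro τ hτ
    apply hε₀
    rw [Real.dist_eq, sub_zero]
    have : b ≤ ε₀/2 := min_le_right _ _
    linarith
  -- V₁: tube with orbit within r of x for |t| ≤ b
  obtain ⟨V₁, hV₁open, hxV₁, hV₁⟩ := flowbox_tube_aux'
    (F := fun p : ℝ × X => dist (φ p.1 p.2) x)
    (continuous_dist.comp ((φ.continuous continuous_fst continuous_snd).prodMk
      continuous_const))
    (isCompact_Icc (a := -b) (b := b)) (isOpen_Iio (a := r)) x
    (fun t ht => by
      simp only [mem_Iio]
      have := hbsmall t (abs_le.mpr ⟨ht.1, ht.2⟩)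
      linarith)
  simp only [mem_Iio] at hV₁
  -- V₂: strict inequalities at times ±b
  set V₂ : Set X := {y | h (φ b y) < h x} ∩ {y | h x < h (φ (-b) y)} with hV₂def
  have hV₂open : IsOpen V₂ := by
    apply IsOpen.inter
    · exact isOpen_Iio.preimage (hh.comp (φ.continuous continuous_const continuous_id))
    · exact isOpen_Ioi.preimage (hh.comp (φ.continuous continuous_const continuous_id))
  have hxV₂ : x ∈ V₂ := by
    constructor
    · have := hmono x hxW 0 b (by linarith) (by linarith) hbρ
      have hx0 : φ (0:ℝ) x = x := φ.map_zero_apply x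
      rw [hx0] at this
      simp only [mem_setOf_eq]
      nlinarith
    · have := hmono x hxW (-b) 0 (by linarith) (by linarith) (by linarith)
      have hx0 : φ (0:ℝ) x = x := φ.map_zero_apply x
      rw [hx0] at this
      simp only [mem_setOf_eq]
      nlinarith
  refine ⟨V₁ ∩ V₂, hV₁open.inter hV₂open, ⟨hxV₁, hxV₂⟩, fun _ _ _ y hy => ?_⟩
  obtain ⟨hy₁, hy₂⟩ := hy
  -- IVT
  have hg : ContinuousOn (fun t : ℝ => h (φ t y)) (Icc (-b) b) :=
    (hh.comp (φ.continuous continuous_id continuous_const)).continuousOn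
  have hivt := intermediate_value_Icc' (by linarith : -b ≤ b) hg
  have hmem : h x ∈ Icc (h (φ b y)) (h (φ (-b) y)) := ⟨le_of_lt hy₂.1, le_of_lt hy₂.2⟩
  obtain ⟨t, htmem, hteq⟩ := hivt hmem
  exact ⟨t, le_trans (abs_le.mpr ⟨htmem.1, htmem.2⟩) hba,
    le_of_lt (hV₁ y hy₁ t ⟨htmem.1, htmem.2⟩), hteq⟩

/-- Lemma `lem0`: existence of a flowbox structure around any point of a
locally compact metric space carrying a free flow. -/
theorem exists_flowbox_structure {X : Type*} [MetricSpace X] [LocallyCompactSpace X]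
    (φ : Flow ℝ X) (hfree : φ.IsFree) (x : X) :
    ∃ (B : ℕ → Set X) (l : ℕ → ℝ),
      (∀ n, IsFlowbox φ (B n) (l n)) ∧
      (∀ n, (interior (B n)).Nonempty) ∧
      -- (i)
      (∀ n : ℕ, 1 ≤ n →
        centralSlice φ (B n) ⊆ centralSlice φ (B (n - 1)) ∩ interior (B (n - 1))) ∧
      -- (ii)
      (∀ L : ℝ, 0 < L → ∃ N : ℕ, ∀ n : ℕ, N < n → L < l n) ∧
      -- (iii)
      (∀ n : ℕ, 1 ≤ n → centralSlice φ (B n) ⊆ Metric.ball x (1 / (n : ℝ))) ∧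
      -- (iv)
      (∀ n : ℕ, ∀ l' : ℝ, 0 < l' → l' ≤ l n →
        (interior (flowTube φ (centralSlice φ (B n))
          (Set.Icc (-(l' / 2)) (l' / 2)))).Nonempty) ∧
      -- (v)
      (∀ n : ℕ, ∀ η : ℝ, 0 < η → η < l n / 2 → ∃ k : ℕ, n < k ∧
        ∀ L₁ L₂ : ℝ, L₁ ≤ L₂ → -(l n / 2) < L₁ - η → L₂ + η < l n / 2 →
          flowTube φ (centralSlice φ (B k)) (Set.Icc L₁ L₂) ⊆
            interior (flowTube φ (centralSlice φ (B n)) (Set.Icc (L₁ - η) (L₂ + η)))) := by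
  classical
  obtain ⟨K, hKcomp, hKnhds⟩ := exists_compact_mem_nhds x
  obtain ⟨h, δ, ρ, W, hh, hδ, hρ, hρhalf, hWopen, hxW, hmono⟩ :=
    flowbox_monotone_aux φ hfree x
  obtain ⟨l, hlval⟩ : ∃ l : ℕ → ℝ, ∀ n, l n = (n : ℝ) + 1 :=
    ⟨fun n => (n : ℝ) + 1, fun _ => rfl⟩
  have hlpos : ∀ n, 0 < l n := fun n => by rw [hlval]; positivity
  have hρM : ∀ n, ρ ≤ 4 * l n + 1 := by
    intro n
    have h1 : (0:ℝ) ≤ (n:ℝ) := Nat.cast_nonneg n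
    rw [hlval]
    linarith
  -- large-time separation near x
  have hLarge : ∀ n : ℕ, ∃ c : ℝ, 0 < c ∧ ∃ W₂ : Set X, IsOpen W₂ ∧ x ∈ W₂ ∧
      ∀ y ∈ W₂, ∀ w : ℝ, ρ ≤ |w| → |w| ≤ 4 * l n + 1 → c < dist (φ w y) x := by
    intro n
    set C : Set ℝ := Icc (-(4 * l n + 1)) (-ρ) ∪ Icc ρ (4 * l n + 1) with hCdef
    have hCcomp : IsCompact C := isCompact_Icc.union isCompact_Icc
    have hCne : C.Nonempty := ⟨ρ, Or.inr ⟨le_refl ρ, hρM n⟩⟩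
    obtain ⟨w₀, hw₀, hmin⟩ := hCcomp.exists_isMinOn (f := fun w => dist (φ w x) x) hCne
      (((φ.continuous continuous_id continuous_const).dist continuous_const).continuousOn)
    have hw₀ne : w₀ ≠ 0 := by
      rcases hw₀ with h1 | h1
      · intro he; rw [he] at h1; linarith [h1.2, hρ]
      · intro he; rw [he] at h1; linarith [h1.1, hρ]
    have hm₂pos : 0 < dist (φ w₀ x) x :=
      dist_pos.2 (fun he => hw₀ne (hfree x w₀ he))
    set c : ℝ := dist (φ w₀ x) x / 2 with hcdef
    obtain ⟨W₂, hW₂open, hxW₂, hW₂⟩ := flowbox_tube_aux'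
      (F := fun p : ℝ × X => dist (φ p.1 p.2) x)
      (continuous_dist.comp ((φ.continuous continuous_fst continuous_snd).prodMk
        continuous_const))
      hCcomp (isOpen_Ioi (a := c)) x
      (fun t ht => by
        simp only [mem_Ioi]
        have hmm := isMinOn_iff.1 hmin t ht
        rw [hcdef]; linarith)
    simp only [mem_Ioi] at hW₂
    refine ⟨c, by positivity, W₂, hW₂open, hxW₂, fun y hy w hw1 hw2 => ?_⟩
    apply hW₂ y hy w
    rcases abs_cases w with ⟨he, _⟩ | ⟨he, _⟩
    · exact Or.inr ⟨by rw [he] at hw1; exact hw1, by rw [he] at hw2; exact hw2⟩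
    · refine Or.inl ⟨?_, ?_⟩
      · rw [he] at hw2; linarith
      · rw [he] at hw1; linarith
  choose c hcpos W₂ hW₂open hxW₂ hW₂ using hLarge
  -- covering sets
  choose V hVopen hxV hV using flowbox_cover_aux φ x h δ ρ W hh hδ hxW hmono
  -- recursive construction of radii
  have hbase : ∃ r₀ : ℝ, 0 < r₀ ∧ r₀ ≤ 1/((0:ℝ) + 1) ∧ closedBall x r₀ ⊆ K ∧
      closedBall x r₀ ⊆ W ∧ closedBall x r₀ ⊆ W₂ 0 ∧ r₀ ≤ c 0 := by
    have hU : K ∩ (W ∩ W₂ 0) ∈ nhds x :=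
      Filter.inter_mem hKnhds (Filter.inter_mem (hWopen.mem_nhds hxW)
        ((hW₂open 0).mem_nhds (hxW₂ 0)))
    obtain ⟨r₀, h1, h2, h3⟩ := flowbox_ball_aux hU
      (lt_min one_pos (hcpos 0) : (0:ℝ) < min 1 (c 0))
    refine ⟨r₀, h1, ?_, fun z hz => (h3 hz).1, fun z hz => (h3 hz).2.1,
      fun z hz => (h3 hz).2.2, le_trans h2 (min_le_right _ _)⟩
    norm_num
    exact le_trans h2 (min_le_left _ _)
  have hstep : ∀ (n : ℕ) (rp : ℝ), ∃ r' : ℝ,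
      (0 < r' ∧ r' ≤ 1/(((n:ℝ)+1) + 1) ∧ closedBall x r' ⊆ K ∧
        closedBall x r' ⊆ W ∧ closedBall x r' ⊆ W₂ (n+1) ∧ r' ≤ c (n+1)) ∧
      (0 < rp → r' ≤ rp ∧ closedBall x r' ⊆ V rp (min ρ (l n / 2))) := by
    intro n rp
    by_cases hrp : 0 < rp
    · have hU : (K ∩ (W ∩ W₂ (n+1))) ∩ V rp (min ρ (l n / 2)) ∈ nhds x := by
        refine Filter.inter_mem (Filter.inter_mem hKnhds (Filter.inter_mem
          (hWopen.mem_nhds hxW) (((hW₂open (n+1)).mem_nhds (hxW₂ (n+1)))))) ?_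
        exact (hVopen rp (min ρ (l n / 2))).mem_nhds (hxV rp (min ρ (l n / 2)))
      have hepos : (0:ℝ) < min (1/(((n:ℝ)+1) + 1)) (min (c (n+1)) rp) := by
        refine lt_min (by positivity) (lt_min (hcpos (n+1)) hrp)
      obtain ⟨r', h1, h2, h3⟩ := flowbox_ball_aux hU hepos
      refine ⟨r', ⟨h1, le_trans h2 (min_le_left _ _), fun z hz => (h3 hz).1.1,
        fun z hz => (h3 hz).1.2.1, fun z hz => (h3 hz).1.2.2,
        le_trans h2 (le_trans (min_le_right _ _) (min_le_left _ _))⟩,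
        fun _ => ⟨le_trans h2 (le_trans (min_le_right _ _) (min_le_right _ _)),
          fun z hz => (h3 hz).2⟩⟩
    · have hU : K ∩ (W ∩ W₂ (n+1)) ∈ nhds x :=
        Filter.inter_mem hKnhds (Filter.inter_mem (hWopen.mem_nhds hxW)
          ((hW₂open (n+1)).mem_nhds (hxW₂ (n+1))))
      have hepos : (0:ℝ) < min (1/(((n:ℝ)+1) + 1)) (c (n+1)) := by
        refine lt_min (by positivity) (hcpos (n+1))
      obtain ⟨r', h1, h2, h3⟩ := flowbox_ball_aux hU hepos
      exact ⟨r', ⟨h1, le_trans h2 (min_le_left _ _), fun z hz => (h3 hz).1,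
        fun z hz => (h3 hz).2.1, fun z hz => (h3 hz).2.2,
        le_trans h2 (min_le_right _ _)⟩, fun hc => absurd hc hrp⟩
  choose F hF1 hF2 using hstep
  obtain ⟨r₀, hr₀⟩ := hbase
  obtain ⟨r, hr0eq, hrsucc⟩ : ∃ r : ℕ → ℝ, r 0 = r₀ ∧ ∀ n, r (n+1) = F n (r n) :=
    ⟨fun n => Nat.rec r₀ F n, rfl, fun _ => rfl⟩
  have hGood : ∀ n, 0 < r n ∧ r n ≤ 1/((n:ℝ) + 1) ∧ closedBall x (r n) ⊆ K ∧
      closedBall x (r n) ⊆ W ∧ closedBall x (r n) ⊆ W₂ n ∧ r n ≤ c n := by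
    intro n
    cases n with
    | zero => rw [hr0eq]; exact_mod_cast hr₀
    | succ m => rw [hrsucc m]; exact_mod_cast hF1 m (r m)
  have hnest : ∀ n, r (n+1) ≤ r n ∧ closedBall x (r (n+1)) ⊆ V (r n) (min ρ (l n / 2)) := by
    intro n
    rw [hrsucc n]
    exact hF2 n (r n) (hGood n).1
  -- the sections and flowboxes
  obtain ⟨S, hSmem⟩ : ∃ S : ℕ → Set X,
      ∀ n y, y ∈ S n ↔ y ∈ closedBall x (r n) ∧ h y = h x :=
    ⟨fun n => {y | y ∈ closedBall x (r n) ∧ h y = h x}, fun _ _ => Iff.rfl⟩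
  obtain ⟨B, hBeq⟩ : ∃ B : ℕ → Set X,
      ∀ n, B n = flowTube φ (S n) (Icc (-(l n / 2)) (l n / 2)) := ⟨_, fun _ => rfl⟩
  -- no-return property
  have hNR : ∀ n, ∀ y ∈ S n, ∀ w : ℝ, w ≠ 0 → |w| ≤ 4 * l n + 1 → φ w y ∉ S n := by
    intro n y hy w hw hwM hcon
    obtain ⟨hy1, hy2⟩ := (hSmem n y).1 hy
    obtain ⟨hc1, hc2⟩ := (hSmem n _).1 hcon
    rcases le_or_gt |w| ρ with hsmall | hlarge
    · have hyW : y ∈ W := (hGood n).2.2.2.1 hy1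
      rcases hw.lt_or_gt with hneg | hpos
      · have := hmono y hyW w 0 (by linarith [(abs_le.1 hsmall).1]) (le_of_lt hneg)
          (le_of_lt hρ)
        rw [φ.map_zero_apply] at this
        nlinarith
      · have := hmono y hyW 0 w (by linarith) (le_of_lt hpos) (abs_le.1 hsmall).2
        rw [φ.map_zero_apply] at this
        nlinarith
    · have h1 := hW₂ n y ((hGood n).2.2.2.2.1 hy1) w (le_of_lt hlarge) hwM
      have h2 : dist (φ w y) x ≤ r n := mem_closedBall.1 hc1
      have h3 : r n ≤ c n := (hGood n).2.2.2.2.2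
      linarith
  -- visit characterization
  have hchar : ∀ n, ∀ y ∈ S n, ∀ t : ℝ, |t| ≤ 2 * l n → (φ t y ∈ B n ↔ |t| ≤ l n / 2) := by
    intro n y hy t h2l
    rw [hBeq n]
    constructor
    · intro hmem
      obtain ⟨z, hz, v, hv, hzv⟩ := hmem
      have hvabs : |v| ≤ l n / 2 := abs_le.2 ⟨hv.1, hv.2⟩
      have hzy : φ (t - v) y = z := by
        have e : φ (-v) (φ v z) = φ (-v) (φ t y) := congrArg _ hzv
        rw [← φ.map_add, ← φ.map_add, neg_add_cancel, φ.map_zero_apply] at e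
        rw [show t - v = -v + t by ring]
        exact e.symm
      have htv : t - v = 0 := by
        by_contra hne
        apply hNR n y hy (t - v) hne ?_ (hzy ▸ hz)
        have habs : |t - v| ≤ |t| + |v| := abs_sub _ _
        have hl := hlpos n
        linarith
      have : t = v := by linarith [sub_eq_zero.1 htv]
      rw [this]; exact hvabs
    · intro hτ
      exact ⟨y, hy, t, ⟨(abs_le.1 hτ).1, (abs_le.1 hτ).2⟩, rfl⟩
  -- compactness
  have hScomp : ∀ n, IsCompact (S n) := by
    intro n
    have h1 : IsCompact (closedBall x (r n)) :=
      hKcomp.of_isClosed_subset Metric.isClosed_closedBall (hGood n).2.2.1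
    have h2 : S n = closedBall x (r n) ∩ h ⁻¹' {h x} := by
      ext y
      rw [hSmem n y]
      simp only [mem_inter_iff, mem_preimage, mem_singleton_iff]
    rw [h2]
    exact h1.inter_right (isClosed_singleton.preimage hh)
  have hBcomp : ∀ n, IsCompact (B n) := by
    intro n
    have h2 : B n = (fun p : X × ℝ => φ p.2 p.1) '' ((S n) ×ˢ Icc (-(l n / 2)) (l n / 2)) := by
      rw [hBeq n]
      ext p
      simp only [flowTube, mem_setOf_eq, mem_image, mem_prod, Prod.exists]
      constructor
      · rintro ⟨y, hy, t, ht, he⟩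
        exact ⟨y, t, ⟨hy, ht⟩, he⟩
      · rintro ⟨y, t, ⟨hy, ht⟩, he⟩
        exact ⟨y, hy, t, ht, he⟩
    rw [h2]
    exact ((hScomp n).prod isCompact_Icc).image (φ.continuous continuous_snd continuous_fst)
  -- flowbox property
  have hbox : ∀ n, IsFlowbox φ (B n) (l n) := by
    intro n
    refine ⟨hBcomp n, hlpos n, ?_⟩
    intro p hp
    rw [hBeq n] at hp
    obtain ⟨y, hy, s, hs, rfl⟩ := hp
    have hl := hlpos n
    have hs1 := hs.1
    have hs2 := hs.2
    refine ⟨-(l n / 2) - s, l n / 2 - s, l n / 2, by linarith, by linarith, by linarith,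
      by ring, ?_, ?_⟩
    · intro t ht
      rw [← φ.map_add]
      refine (hchar n y hy (t + s) ?_).2 (abs_le.2 ⟨by linarith [ht.1], by linarith [ht.2]⟩)
      exact abs_le.2 ⟨by linarith [ht.1], by linarith [ht.2]⟩
    · intro t ht hmem
      rw [← φ.map_add] at hmem
      rcases ht with ⟨h1, h2⟩ | ⟨h1, h2⟩
      · have hb := (hchar n y hy (t + s) (abs_le.2 ⟨by linarith, by linarith⟩)).1 hmem
        have := (abs_le.1 hb).1
        linarith
      · have hb := (hchar n y hy (t + s) (abs_le.2 ⟨by linarith, by linarith⟩)).1 hmem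
        have := (abs_le.1 hb).2
        linarith
  -- central slice identification
  have hslice : ∀ n, centralSlice φ (B n) = S n := by
    intro n
    have hl := hlpos n
    apply Subset.antisymm
    · intro p hp
      obtain ⟨hpB, a, ha0, hIn, ε, hε, hOut⟩ := hp
      rw [hBeq n] at hpB
      obtain ⟨y, hy, s, hs, rfl⟩ := hpB
      have hs1 := hs.1
      have hs2 := hs.2
      have hal : a ≤ l n := by
        by_contra hcon
        push_neg at hcon
        have htpos : l n < min a (5 * l n / 4) := lt_min hcon (by linarith)
        have ht1 : min a (5 * l n / 4) ≤ a := min_le_left _ _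
        have ht2 : min a (5 * l n / 4) ≤ 5 * l n / 4 := min_le_right _ _
        have hmem := hIn (min a (5 * l n / 4)) ⟨by linarith, ht1⟩
        rw [← φ.map_add] at hmem
        have hb := (hchar n y hy (min a (5 * l n / 4) + s)
          (abs_le.2 ⟨by linarith, by linarith⟩)).1 hmem
        have := (abs_le.1 hb).2
        linarith
      have hend1 : a + s ≤ l n / 2 := by
        have hmem := hIn a ⟨by linarith, le_refl a⟩
        rw [← φ.map_add] at hmem
        have hb := (hchar n y hy (a + s) (abs_le.2 ⟨by linarith, by linarith⟩)).1 hmem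
        linarith [(abs_le.1 hb).2]
      have hend2 : -(l n / 2) ≤ s - a := by
        have hmem := hIn (-a) ⟨le_refl _, by linarith⟩
        rw [← φ.map_add] at hmem
        have hb := (hchar n y hy (-a + s) (abs_le.2 ⟨by linarith, by linarith⟩)).1 hmem
        linarith [(abs_le.1 hb).1]
      have hout1 : l n / 2 - s ≤ a := by
        by_contra hcon
        push_neg at hcon
        have hepos : 0 < min ε (l n / 2 - s - a) := lt_min hε (by linarith)
        have he1 : min ε (l n / 2 - s - a) ≤ ε := min_le_left _ _
        have he2 : min ε (l n / 2 - s - a) ≤ l n / 2 - s - a := min_le_right _ _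
        have hmem := hOut (a + min ε (l n / 2 - s - a)/2) (Or.inr ⟨by linarith, by linarith⟩)
        rw [← φ.map_add] at hmem
        exact hmem ((hchar n y hy (a + min ε (l n / 2 - s - a)/2 + s)
          (abs_le.2 ⟨by linarith, by linarith⟩)).2
          (abs_le.2 ⟨by linarith, by linarith⟩))
      have hout2 : l n / 2 + s ≤ a := by
        by_contra hcon
        push_neg at hcon
        have hepos : 0 < min ε (l n / 2 + s - a) := lt_min hε (by linarith)
        have he1 : min ε (l n / 2 + s - a) ≤ ε := min_le_left _ _
        have he2 : min ε (l n / 2 + s - a) ≤ l n / 2 + s - a := min_le_right _ _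
        have hmem := hOut (-a - min ε (l n / 2 + s - a)/2) (Or.inl ⟨by linarith, by linarith⟩)
        rw [← φ.map_add] at hmem
        exact hmem ((hchar n y hy (-a - min ε (l n / 2 + s - a)/2 + s)
          (abs_le.2 ⟨by linarith, by linarith⟩)).2
          (abs_le.2 ⟨by linarith, by linarith⟩))
      have hs0 : s = 0 := by linarith
      rw [hs0, φ.map_zero_apply]
      exact hy
    · intro y hy
      have hyB : y ∈ B n := by
        rw [hBeq n]
        exact ⟨y, hy, 0, ⟨by linarith, by linarith⟩, φ.map_zero_apply y⟩
      refine ⟨hyB, l n / 2, by linarith, ?_, l n / 2, by linarith, ?_⟩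
      · intro t ht
        exact (hchar n y hy t (abs_le.2 ⟨by linarith [ht.1], by linarith [ht.2]⟩)).2
          (abs_le.2 ⟨ht.1, ht.2⟩)
      · intro t ht hmem
        rcases ht with ⟨h1, h2⟩ | ⟨h1, h2⟩
        · have hb := (hchar n y hy t (abs_le.2 ⟨by linarith, by linarith⟩)).1 hmem
          linarith [(abs_le.1 hb).1]
        · have hb := (hchar n y hy t (abs_le.2 ⟨by linarith, by linarith⟩)).1 hmem
          linarith [(abs_le.1 hb).2]
  -- the V-neighborhoods sit inside flow tubes
  have hVsub : ∀ (n : ℕ) (a : ℝ), 0 < a →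
      V (r n) (min ρ a) ⊆ flowTube φ (S n) (Icc (-a) a) := by
    intro n a ha y hyV
    obtain ⟨t, htabs, htd, hth⟩ := hV (r n) (min ρ a) (hGood n).1 (lt_min hρ ha)
      (min_le_left _ _) y hyV
    have htabs' : |t| ≤ a := le_trans htabs (min_le_right _ _)
    refine ⟨φ t y, (hSmem n _).2 ⟨mem_closedBall.2 htd, hth⟩, -t,
      ⟨by linarith [(abs_le.1 htabs').2], by linarith [(abs_le.1 htabs').1]⟩, ?_⟩
    rw [← φ.map_add, neg_add_cancel, φ.map_zero_apply]
  -- Assemble the result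
  refine ⟨B, l, hbox, ?_, ?_, ?_, ?_, ?_, ?_⟩
  · -- nonempty interior
    intro n
    refine ⟨x, mem_interior.2 ⟨V (r n) (min ρ (l n / 2)), ?_, hVopen _ _, hxV _ _⟩⟩
    rw [hBeq n]
    exact hVsub n (l n / 2) (by linarith [hlpos n])
  · -- (i)
    intro n hn
    obtain ⟨m, rfl⟩ : ∃ m, n = m + 1 := ⟨n - 1, (Nat.succ_pred_eq_of_pos hn).symm⟩
    simp only [Nat.add_sub_cancel]
    rw [hslice (m+1), hslice m]
    intro y hy
    obtain ⟨hy1, hy2⟩ := (hSmem (m+1) y).1 hy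
    refine ⟨(hSmem m y).2 ⟨closedBall_subset_closedBall (hnest m).1 hy1, hy2⟩, ?_⟩
    refine mem_interior.2 ⟨V (r m) (min ρ (l m / 2)), ?_, hVopen _ _, (hnest m).2 hy1⟩
    rw [hBeq m]
    exact hVsub m (l m / 2) (by linarith [hlpos m])
  · -- (ii)
    intro L hL
    refine ⟨⌈L⌉₊, fun n hn => ?_⟩
    have h1 : (⌈L⌉₊ : ℝ) < (n : ℝ) := by exact_mod_cast hn
    have h2 : L ≤ (⌈L⌉₊ : ℝ) := Nat.le_ceil L
    rw [hlval]
    linarith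
  · -- (iii)
    intro n hn
    rw [hslice n]
    intro y hy
    have h1 : dist y x ≤ r n := mem_closedBall.1 ((hSmem n y).1 hy).1
    have h2 : r n ≤ 1/((n:ℝ)+1) := (hGood n).2.1
    have hn' : (0:ℝ) < (n:ℝ) := by exact_mod_cast hn
    have h3 : 1/((n:ℝ)+1) < 1/(n:ℝ) := by
      apply one_div_lt_one_div_of_lt hn'
      linarith
    exact mem_ball.2 (by linarith)
  · -- (iv)
    intro n l' hl' hll
    rw [hslice n]
    exact ⟨x, mem_interior.2 ⟨V (r n) (min ρ (l'/2)),
      hVsub n (l'/2) (by linarith), hVopen _ _, hxV _ _⟩⟩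
  · -- (v)
    intro n η hη hηl
    obtain ⟨ε, hε, hball⟩ := Metric.isOpen_iff.1 (hVopen (r n) (min ρ η)) x (hxV _ _)
    obtain ⟨N, hN⟩ := exists_nat_one_div_lt hε
    refine ⟨max (n+1) N, lt_of_lt_of_le (Nat.lt_succ_self n) (le_max_left _ _), ?_⟩
    intro L₁ L₂ hL12 hL1 hL2
    rw [hslice (max (n+1) N), hslice n]
    have hSk : S (max (n+1) N) ⊆ V (r n) (min ρ η) := by
      intro y hy
      apply hball
      rw [mem_ball]
      have h1 : dist y x ≤ r (max (n+1) N) :=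
        mem_closedBall.1 ((hSmem _ y).1 hy).1
      have h2 : r (max (n+1) N) ≤ 1/(((max (n+1) N : ℕ):ℝ)+1) := (hGood _).2.1
      have h3 : 1/(((max (n+1) N : ℕ):ℝ)+1) ≤ 1/((N:ℝ)+1) := by
        apply one_div_le_one_div_of_le (by positivity)
        have : (N:ℝ) ≤ ((max (n+1) N : ℕ):ℝ) := by exact_mod_cast le_max_right (n+1) N
        linarith
      linarith
    intro p hp
    obtain ⟨y, hy, t, htmem, rfl⟩ := hp
    apply mem_interior.2
    refine ⟨(fun z => φ (-t) z) ⁻¹' (V (r n) (min ρ η)), ?_,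
      (hVopen _ _).preimage (φ.continuous continuous_const continuous_id), ?_⟩
    · intro z hz
      obtain ⟨w, hw, s', hs'mem, hs'eq⟩ := hVsub n η hη hz
      refine ⟨w, hw, t + s',
        ⟨by linarith [hs'mem.1, htmem.1], by linarith [hs'mem.2, htmem.2]⟩, ?_⟩
      rw [φ.map_add, hs'eq, ← φ.map_add, add_neg_cancel, φ.map_zero_apply]
    · show φ (-t) (φ t y) ∈ V (r n) (min ρ η)
      rw [← φ.map_add, neg_add_cancel, φ.map_zero_apply]
      exact hSk hy
end

section
/- Let X be a locally compact metric space, φ a free minimal flow on X, and let C be the central slice of a flowbox B with nonempty interior. Suppose C is a Cantor space and S, T, C' are clopen subsets of C with S, T ⊆ C' ⊆ C ∩ int(B). Suppose y ∈ S is such that Φ_{C'}(y) ∈ T. Then there is a clopen neighborhood V ⊆ S of y such that: (a) the map V → C', y' ↦ Φ_{C'}(y'), has image contained in T and is a homeomorphism onto its image; and (b) the map V → (0,∞), y' ↦ τ_{C'}(y'), is continuous. -/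
open Set

namespace ReturnMapAux

open Filter Topology

variable {X : Type*} [MetricSpace X] {φ : Flow ℝ X} {B : Set X} {l : ℝ}

lemma ap_le {x : X} {am ap ap' ε' : ℝ} (ham : am ≤ 0) (hap' : 0 ≤ ap') (hε' : 0 < ε')
    (hin : ∀ t ∈ Set.Icc am ap, φ t x ∈ B)
    (hout' : ∀ t ∈ Set.Ioo ap' (ap' + ε'), φ t x ∉ B) : ap ≤ ap' := by
  by_contra h
  push_neg at h
  exact hout' (min ap (ap' + ε'/2))
    ⟨lt_min h (by linarith), (min_le_right _ _).trans_lt (by linarith)⟩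
    (hin _ ⟨ham.trans (le_min (hap'.trans h.le) (by linarith)), min_le_left _ _⟩)

lemma le_am {x : X} {am am' ap ε' : ℝ} (hap : 0 ≤ ap) (ham' : am' ≤ 0) (hε' : 0 < ε')
    (hin : ∀ t ∈ Set.Icc am ap, φ t x ∈ B)
    (hout' : ∀ t ∈ Set.Ioo (am' - ε') am', φ t x ∉ B) : am' ≤ am := by
  by_contra h
  push_neg at h
  exact hout' (max am (am' - ε'/2)) ⟨lt_of_lt_of_le (by linarith) (le_max_right _ _),
      max_lt h (by linarith)⟩
    (hin _ ⟨le_max_left _ _, le_trans (max_le (by linarith) (by linarith)) hap⟩)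

lemma slice_data (hB : IsFlowbox φ B l) {x : X} (hx : x ∈ centralSlice φ B) :
    x ∈ B ∧ (∀ t ∈ Set.Icc (-(l/2)) (l/2), φ t x ∈ B) ∧
      ∃ ε : ℝ, 0 < ε ∧
        ∀ t ∈ Set.Ioo (-(l/2) - ε) (-(l/2)) ∪ Set.Ioo (l/2) (l/2 + ε), φ t x ∉ B := by
  obtain ⟨hxB, a, ha0, hain, ε', hε', haout⟩ := hx
  obtain ⟨am, ap, ε, ham, hap, hε, hlen, hin, hout⟩ := hB.2.2 x hxB
  have h1 : ap ≤ a := ap_le ham ha0 hε' hin (fun t ht => haout t (Or.inr ht))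
  have h2 : a ≤ ap := ap_le (neg_nonpos.mpr ha0) hap hε hain (fun t ht => hout t (Or.inr ht))
  have h3 : -a ≤ am := le_am hap (neg_nonpos.mpr ha0) hε' hin (fun t ht => haout t (Or.inl ht))
  have h4 : am ≤ -a := le_am ha0 ham hε hain (fun t ht => hout t (Or.inl ht))
  have ha : a = l/2 := by linarith
  rw [ha] at hain haout
  exact ⟨hxB, hain, ε', hε', haout⟩

lemma mem_slice_of (hB : IsFlowbox φ B l) {x : X} (hxB : x ∈ B)
    (h : ∀ t ∈ Set.Icc (-(l/2)) (l/2), φ t x ∈ B) : x ∈ centralSlice φ B := by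
  have hl := hB.2.1
  obtain ⟨am, ap, ε, ham, hap, hε, hlen, hin, hout⟩ := hB.2.2 x hxB
  have h1 : l/2 ≤ ap := ap_le (by linarith) hap hε h (fun t ht => hout t (Or.inr ht))
  have h2 : am ≤ -(l/2) := le_am (show (0:ℝ) ≤ l/2 by linarith) ham hε h (fun t ht => hout t (Or.inl ht))
  have hap' : ap = l/2 := by linarith
  have ham' : am = -(l/2) := by linarith
  refine ⟨hxB, l/2, by linarith, h, ε, hε, ?_⟩
  intro t ht
  apply hout t
  rw [ham', hap']
  exact ht

lemma slice_isClosed (hB : IsFlowbox φ B l) : IsClosed (centralSlice φ B) := by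
  have hBc : IsClosed B := hB.1.isClosed
  have heq : centralSlice φ B
      = B ∩ ⋂ t ∈ Set.Icc (-(l/2)) (l/2), (fun x => φ t x) ⁻¹' B := by
    ext x
    simp only [Set.mem_inter_iff, Set.mem_iInter, Set.mem_preimage]
    exact ⟨fun hx => ⟨(slice_data hB hx).1, (slice_data hB hx).2.1⟩,
      fun hx => mem_slice_of hB hx.1 hx.2⟩
  rw [heq]
  exact hBc.inter (isClosed_biInter fun t _ =>
    hBc.preimage (φ.continuous continuous_const continuous_id))

lemma no_return (hB : IsFlowbox φ B l) {x : X} (hx : x ∈ centralSlice φ B)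
    {t : ℝ} (ht0 : 0 < t) (htl : t ≤ l) : φ t x ∉ centralSlice φ B := by
  intro hret
  obtain ⟨-, hin, ε, hε, hout⟩ := slice_data hB hx
  have hin' := (slice_data hB hret).2.1
  have hmε : min ε t ≤ ε := min_le_left _ _
  have hmt : min ε t ≤ t := min_le_right _ _
  have hm : 0 < min ε t := lt_min hε ht0
  have h1 : φ (l/2 + min ε t / 2) x ∉ B :=
    hout _ (Or.inr ⟨by linarith, by linarith⟩)
  apply h1
  have heq := φ.map_add (l/2 + min ε t / 2 - t) t x
  have h2 : l/2 + min ε t / 2 - t + t = l/2 + min ε t / 2 := by ring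
  rw [h2] at heq
  rw [heq]
  exact hin' _ ⟨by linarith, by linarith⟩

lemma near_slice (hB : IsFlowbox φ B l) {z : X} (hz : z ∈ centralSlice φ B)
    {δ : ℝ} (hδ : 0 < δ) :
    ∃ N : Set X, IsOpen N ∧ z ∈ N ∧
      ∀ w ∈ N ∩ B, ∃ s : ℝ, |s| < δ ∧ φ s w ∈ centralSlice φ B := by
  have hl := hB.2.1
  obtain ⟨hzB, hin, ε, hε, hout⟩ := slice_data hB hz
  have hm0 : 0 < min ε δ / 2 := by
    have := lt_min hε hδ; linarith
  have hmε : min ε δ / 2 < ε := by have := min_le_left ε δ; have := lt_min hε hδ; linarith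
  have hmδ : min ε δ / 2 < δ := by have := min_le_right ε δ; have := lt_min hε hδ; linarith
  set m := min ε δ / 2 with hmdef
  have hp : φ (l/2 + m) z ∉ B := hout _ (Or.inr ⟨by linarith, by linarith⟩)
  have hn : φ (-(l/2) - m) z ∉ B := hout _ (Or.inl ⟨by linarith, by linarith⟩)
  have hBc : IsClosed B := hB.1.isClosed
  refine ⟨(fun w => φ (l/2 + m) w) ⁻¹' Bᶜ ∩ (fun w => φ (-(l/2) - m) w) ⁻¹' Bᶜ,
    ((hBc.isOpen_compl.preimage (φ.continuous continuous_const continuous_id)).inter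
      (hBc.isOpen_compl.preimage (φ.continuous continuous_const continuous_id))),
    ⟨hp, hn⟩, ?_⟩
  rintro w ⟨⟨hw1, hw2⟩, hwB⟩
  obtain ⟨am, ap, εw, ham, hap, hεw, hlen, hinw, houtw⟩ := hB.2.2 w hwB
  have h1 : ap < l/2 + m := by
    by_contra hcon
    push_neg at hcon
    exact hw1 (hinw _ ⟨by linarith, hcon⟩)
  have h2 : -(l/2) - m < am := by
    by_contra hcon
    push_neg at hcon
    exact hw2 (hinw _ ⟨hcon, by linarith⟩)
  refine ⟨ap - l/2, ?_, mem_slice_of hB ?_ ?_⟩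
  · rw [abs_lt]
    constructor <;> linarith
  · exact hinw _ ⟨by linarith, by linarith⟩
  · intro u hu
    obtain ⟨hu1, hu2⟩ := hu
    have heq := φ.map_add u (ap - l/2) w
    rw [← heq]
    exact hinw _ ⟨by linarith, by linarith⟩

lemma tube (hB : IsFlowbox φ B l) {C' U₀ : Set X} (hU₀ : IsOpen U₀)
    (hC'eq : C' = U₀ ∩ centralSlice φ B) (hC'int : C' ⊆ interior B)
    {z : X} (hz : z ∈ C') {δ : ℝ} (hδ : 0 < δ) :
    ∃ U : Set X, IsOpen U ∧ z ∈ U ∧ ∀ w ∈ U, ∃ s : ℝ, |s| < δ ∧ φ s w ∈ C' := by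
  have hzC : z ∈ centralSlice φ B := by rw [hC'eq] at hz; exact hz.2
  have hzU₀ : z ∈ U₀ := by rw [hC'eq] at hz; exact hz.1
  have hW : IsOpen ((Function.uncurry φ) ⁻¹' U₀) := hU₀.preimage φ.cont'
  have hmem : ((0:ℝ), z) ∈ (Function.uncurry φ) ⁻¹' U₀ := by
    show φ 0 z ∈ U₀
    rw [φ.map_zero_apply]
    exact hzU₀
  obtain ⟨u, v, hu, hv, h0u, hzv, huv⟩ := isOpen_prod_iff.mp hW 0 z hmem
  obtain ⟨δ₀, hδ₀, hball⟩ := Metric.isOpen_iff.mp hu 0 h0u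
  have hmin0 : 0 < min δ δ₀ := lt_min hδ hδ₀
  obtain ⟨N, hN, hzN, hNs⟩ := near_slice hB hzC hmin0
  refine ⟨N ∩ v ∩ interior B, (hN.inter hv).inter isOpen_interior,
    ⟨⟨hzN, hzv⟩, hC'int hz⟩, ?_⟩
  rintro w ⟨⟨hwN, hwv⟩, hwB⟩
  obtain ⟨s, hs, hsC⟩ := hNs w ⟨hwN, interior_subset hwB⟩
  refine ⟨s, lt_of_lt_of_le hs (min_le_left _ _), ?_⟩
  rw [hC'eq]
  refine ⟨?_, hsC⟩
  have hsu : s ∈ u := hball (by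
    rw [Metric.mem_ball, Real.dist_eq, sub_zero]
    exact lt_of_lt_of_le hs (min_le_right _ _))
  exact huv (Set.mk_mem_prod hsu hwv)

lemma arrive_gt (hB : IsFlowbox φ B l) {C' : Set X} (hC'C : C' ⊆ centralSlice φ B)
    {x : X} (hx : x ∈ C') {t : ℝ} (ht : 0 < t) (htC : φ t x ∈ C') : l < t := by
  by_contra h
  push_neg at h
  exact no_return hB (hC'C hx) ht h (hC'C htC)

lemma arrive_le {C' : Set X} {x : X} {t : ℝ} (ht : 0 < t) (htC : φ t x ∈ C') :
    firstArriveTime φ C' x ≤ t :=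
  csInf_le ⟨0, fun s hs => hs.1.le⟩ ⟨ht, htC⟩

lemma arrive_nonempty (hB : IsFlowbox φ B l) (hmin : φ.IsMinimal)
    {C' U₀ : Set X} (hU₀ : IsOpen U₀) (hC'eq : C' = U₀ ∩ centralSlice φ B)
    (hC'int : C' ⊆ interior B) {x : X} (hx : x ∈ C') :
    {t : ℝ | 0 < t ∧ φ t x ∈ C'}.Nonempty := by
  obtain ⟨U, hU, hxU, hU'⟩ := tube hB hU₀ hC'eq hC'int hx one_pos
  obtain ⟨p, hp, hpU⟩ := (hmin (φ (2:ℝ) x)).exists_mem_open hU ⟨x, hxU⟩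
  obtain ⟨t, ht0, hteq⟩ := hp
  obtain ⟨s, hs, hsC⟩ := hU' p hpU
  have habs := abs_lt.mp hs
  refine ⟨s + (t + 2), ⟨by linarith, ?_⟩⟩
  have h1 : φ (t + 2) x = p := by rw [φ.map_add]; exact hteq
  rw [φ.map_add, h1]
  exact hsC

lemma arrive_mem (hB : IsFlowbox φ B l) {C' : Set X} (hC'cl : IsClosed C')
    (hC'C : C' ⊆ centralSlice φ B) {x : X} (hx : x ∈ C')
    (hne : {t : ℝ | 0 < t ∧ φ t x ∈ C'}.Nonempty) :
    l < firstArriveTime φ C' x ∧ φ (firstArriveTime φ C' x) x ∈ C' := by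
  have hl := hB.2.1
  have heq : {t : ℝ | 0 < t ∧ φ t x ∈ C'} = {t : ℝ | l ≤ t ∧ φ t x ∈ C'} := by
    ext t
    constructor
    · rintro ⟨ht, htC⟩
      exact ⟨(arrive_gt hB hC'C hx ht htC).le, htC⟩
    · rintro ⟨ht, htC⟩
      exact ⟨lt_of_lt_of_le hl ht, htC⟩
  have hcl : IsClosed {t : ℝ | l ≤ t ∧ φ t x ∈ C'} := by
    have h2 : {t : ℝ | l ≤ t ∧ φ t x ∈ C'} = Set.Ici l ∩ (fun t => φ t x) ⁻¹' C' := rfl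
    rw [h2]
    exact isClosed_Ici.inter (hC'cl.preimage (φ.continuous continuous_id continuous_const))
  have key : firstArriveTime φ C' x ∈ {t : ℝ | l ≤ t ∧ φ t x ∈ C'} := by
    rw [firstArriveTime, heq]
    refine hcl.csInf_mem ?_ ⟨0, fun t ht => le_trans hl.le ht.1⟩
    rw [← heq]
    exact hne
  exact ⟨arrive_gt hB hC'C hx (lt_of_lt_of_le hl key.1) key.2, key.2⟩

lemma arrive_continuousOn (hB : IsFlowbox φ B l) (hmin : φ.IsMinimal)
    {C' U₀ : Set X} (hU₀ : IsOpen U₀) (hC'eq : C' = U₀ ∩ centralSlice φ B)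
    (hC'cl : IsClosed C') (hC'int : C' ⊆ interior B) :
    ContinuousOn (firstArriveTime φ C') C' := by
  have hl := hB.2.1
  have hC'C : C' ⊆ centralSlice φ B := by rw [hC'eq]; exact Set.inter_subset_right
  intro x hx
  have hne := arrive_nonempty hB hmin hU₀ hC'eq hC'int hx
  obtain ⟨htl, htC⟩ := arrive_mem hB hC'cl hC'C hx hne
  rw [ContinuousWithinAt, Metric.tendsto_nhds]
  intro ε hε
  set tx := firstArriveTime φ C' x with htxdef
  have hδ : 0 < min (ε/2) (l/2) := lt_min (half_pos hε) (by linarith)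
  obtain ⟨U, hU, hzU, hUp⟩ := tube hB hU₀ hC'eq hC'int htC hδ
  have hmin1 : min (ε/2) (l/2) ≤ ε/2 := min_le_left _ _
  have hmin2 : min (ε/2) (l/2) ≤ l/2 := min_le_right _ _
  have hcont : Continuous fun w => φ tx w := φ.continuous continuous_const continuous_id
  have hupper : ∀ᶠ w in nhds x, firstArriveTime φ C' w < tx + ε/2 := by
    filter_upwards [hcont.continuousAt.preimage_mem_nhds (hU.mem_nhds hzU)] with w hw
    obtain ⟨s, hs, hsC⟩ := hUp _ hw
    have habs := abs_lt.mp hs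
    have hmem : φ (s + tx) w ∈ C' := by rw [φ.map_add]; exact hsC
    have hle : firstArriveTime φ C' w ≤ s + tx := arrive_le (by linarith) hmem
    linarith
  have hlower : ∀ᶠ w in nhds x, ∀ t ∈ Set.Icc l (tx - ε/2), φ t w ∉ C' := by
    apply isCompact_Icc.eventually_forall_of_forall_eventually
    intro t ht
    have hnot : φ t x ∉ C' := by
      intro hmem
      have h1 := arrive_le (φ := φ) (lt_of_lt_of_le hl ht.1) hmem
      rw [← htxdef] at h1
      have h2 := ht.2
      linarith
    have hopen : IsOpen {z : X × ℝ | φ z.2 z.1 ∉ C'} := by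
      have h3 : {z : X × ℝ | φ z.2 z.1 ∉ C'} = (fun z : X × ℝ => φ z.2 z.1) ⁻¹' C'ᶜ := rfl
      rw [h3]
      exact hC'cl.isOpen_compl.preimage (φ.continuous continuous_snd continuous_fst)
    have hmemxt : ((x, t) : X × ℝ) ∈ {z : X × ℝ | φ z.2 z.1 ∉ C'} := hnot
    filter_upwards [hopen.mem_nhds hmemxt] with z hz using hz
  have hlow2 : ∀ᶠ w in nhdsWithin x C', tx - ε/2 ≤ firstArriveTime φ C' w := by
    filter_upwards [hlower.filter_mono nhdsWithin_le_nhds, self_mem_nhdsWithin] with w hw hwC'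
    apply le_csInf (arrive_nonempty hB hmin hU₀ hC'eq hC'int hwC')
    rintro t ⟨ht0, htC2⟩
    by_contra hcon
    push_neg at hcon
    exact hw t ⟨(arrive_gt hB hC'C hwC' ht0 htC2).le, hcon.le⟩ htC2
  filter_upwards [hupper.filter_mono nhdsWithin_le_nhds, hlow2] with w h1 h2
  rw [Real.dist_eq, abs_lt]
  constructor <;> linarith

end ReturnMapAux

/-- Lemma `lema1`: local homeomorphism property of the first return map to a
clopen subset of a Cantor central slice, and continuity of the first return time. -/
theorem returnMap_clopen_local_homeo {X : Type*} [MetricSpace X] [LocallyCompactSpace X]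
    (φ : Flow ℝ X) (hfree : φ.IsFree) (hmin : φ.IsMinimal)
    (B : Set X) (l : ℝ) (hB : IsFlowbox φ B l) (hBint : (interior B).Nonempty)
    (C : Set X) (hC : C = centralSlice φ B)
    -- `C` is a Cantor space:
    (hCne : C.Nonempty) (hCtd : IsTotallyDisconnected C) (hCperf : Perfect C)
    (S T C' : Set X)
    (hSclopen : IsClopenIn S C) (hTclopen : IsClopenIn T C) (hC'clopen : IsClopenIn C' C)
    (hS : S ⊆ C') (hT : T ⊆ C') (hC' : C' ⊆ C ∩ interior B)
    (y : X) (hy : y ∈ S) (hyT : firstReturnMap φ C' y ∈ T) :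
    ∃ V : Set X, y ∈ V ∧ V ⊆ S ∧ IsClopenIn V C ∧
      Set.MapsTo (firstReturnMap φ C') V T ∧
      Set.InjOn (firstReturnMap φ C') V ∧
      ContinuousOn (firstReturnMap φ C') V ∧
      (∃ e : V ≃ₜ (firstReturnMap φ C' '' V), ∀ v : V, (e v : X) = firstReturnMap φ C' v) ∧
      ContinuousOn (firstArriveTime φ C') V ∧
      (∀ v ∈ V, 0 < firstArriveTime φ C' v) := by
  classical
  subst hC
  obtain ⟨U₀, hU₀, hC'eq⟩ := hC'clopen.1
  obtain ⟨F', hF', hC'eqF⟩ := hC'clopen.2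
  obtain ⟨US, hUS, hSeq⟩ := hSclopen.1
  obtain ⟨UT, hUT, hTeq⟩ := hTclopen.1
  have hl := hB.2.1
  have hCcl : IsClosed (centralSlice φ B) := ReturnMapAux.slice_isClosed hB
  have hCsubB : centralSlice φ B ⊆ B := fun x hx => (ReturnMapAux.slice_data hB hx).1
  have hCcpt : IsCompact (centralSlice φ B) := hB.1.of_isClosed_subset hCcl hCsubB
  have hC'cl : IsClosed C' := by rw [hC'eqF]; exact hF'.inter hCcl
  have hC'C : C' ⊆ centralSlice φ B := fun x hx => (hC' hx).1
  have hC'int : C' ⊆ interior B := fun x hx => (hC' hx).2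
  have hfacts : ∀ x ∈ C', l < firstArriveTime φ C' x ∧ firstReturnMap φ C' x ∈ C' :=
    fun x hx => ReturnMapAux.arrive_mem hB hC'cl hC'C hx
      (ReturnMapAux.arrive_nonempty hB hmin hU₀ hC'eq hC'int hx)
  have hτcont : ContinuousOn (firstArriveTime φ C') C' :=
    ReturnMapAux.arrive_continuousOn hB hmin hU₀ hC'eq hC'cl hC'int
  have hΦcont : ContinuousOn (firstReturnMap φ C') C' := by
    show ContinuousOn (fun w => φ (firstArriveTime φ C' w) w) C'
    exact φ.cont'.comp_continuousOn (hτcont.prodMk continuousOn_id)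
  have hΦmaps : ∀ x ∈ C', firstReturnMap φ C' x ∈ C' := fun x hx => (hfacts x hx).2
  have hinj : Set.InjOn (firstReturnMap φ C') C' := by
    have key : ∀ x₁ ∈ C', ∀ x₂ ∈ C', firstReturnMap φ C' x₁ = firstReturnMap φ C' x₂ →
        firstArriveTime φ C' x₁ ≤ firstArriveTime φ C' x₂ → x₁ = x₂ := by
      intro x₁ h₁ x₂ h₂ heq hle
      have heq' : φ (firstArriveTime φ C' x₁) x₁ = φ (firstArriveTime φ C' x₂) x₂ := heq
      set t₁ := firstArriveTime φ C' x₁ with ht₁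
      set t₂ := firstArriveTime φ C' x₂ with ht₂
      have e1 : φ (-t₁ + t₁) x₁ = φ (-t₁ + t₂) x₂ := by
        rw [φ.map_add, φ.map_add, heq']
      rw [neg_add_cancel, φ.map_zero_apply] at e1
      rcases eq_or_lt_of_le hle with heqt | hlt
      · rw [← heqt, neg_add_cancel, φ.map_zero_apply] at e1
        exact e1
      · exfalso
        have hs : (0:ℝ) < -t₁ + t₂ := by linarith
        have hmem : φ (-t₁ + t₂) x₂ ∈ C' := by rw [← e1]; exact h₁
        have := ReturnMapAux.arrive_le (φ := φ) hs hmem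
        rw [← ht₂] at this
        have ht₁l := (hfacts x₁ h₁).1
        linarith
    intro x₁ h₁ x₂ h₂ heq
    rcases le_total (firstArriveTime φ C' x₁) (firstArriveTime φ C' x₂) with h | h
    · exact key x₁ h₁ x₂ h₂ heq h
    · exact (key x₂ h₂ x₁ h₁ heq.symm h).symm
  -- construct the clopen neighborhood V
  have hyC' : y ∈ C' := hS hy
  have hyC : y ∈ centralSlice φ B := hC'C hyC'
  have hΦyUT : firstReturnMap φ C' y ∈ UT := by rw [hTeq] at hyT; exact hyT.1
  have hWnhds : (firstReturnMap φ C') ⁻¹' UT ∈ nhdsWithin y C' :=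
    hΦcont y hyC' (hUT.mem_nhds hΦyUT)
  obtain ⟨O, hO, hyO, hOsub⟩ := mem_nhdsWithin.mp hWnhds
  haveI : CompactSpace (centralSlice φ B) := isCompact_iff_compactSpace.mp hCcpt
  haveI : TotallyDisconnectedSpace (centralSlice φ B) :=
    totallyDisconnectedSpace_subtype_iff.mpr hCtd
  have hWopen : IsOpen (US ∩ O) := hUS.inter hO
  have hyW : y ∈ US ∩ O := ⟨by rw [hSeq] at hy; exact hy.1, hyO⟩
  have hpre : IsOpen ((Subtype.val : centralSlice φ B → X) ⁻¹' (US ∩ O)) :=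
    hWopen.preimage continuous_subtype_val
  obtain ⟨V', hV'clopen, hyV', hV'sub⟩ :=
    compact_exists_isClopen_in_isOpen hpre (show (⟨y, hyC⟩ : centralSlice φ B) ∈ _ from hyW)
  set V : Set X := Subtype.val '' V' with hVdef
  have hyV : y ∈ V := ⟨⟨y, hyC⟩, hyV', rfl⟩
  have hVsub : V ⊆ (US ∩ O) ∩ centralSlice φ B := by
    rintro _ ⟨v, hv, rfl⟩
    exact ⟨hV'sub hv, v.2⟩
  have hVS : V ⊆ S := by
    intro x hx
    rw [hSeq]
    exact ⟨(hVsub hx).1.1, (hVsub hx).2⟩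
  have hVC' : V ⊆ C' := fun x hx => hS (hVS hx)
  have hVC : V ⊆ centralSlice φ B := fun x hx => (hVsub hx).2
  have hV'cpt : IsCompact V' := hV'clopen.1.isCompact
  have hVcpt : IsCompact V := hV'cpt.image continuous_subtype_val
  have hVclopen : IsClopenIn V (centralSlice φ B) := by
    constructor
    · obtain ⟨Uo, hUo, hUoeq⟩ := isOpen_induced_iff.mp hV'clopen.2
      refine ⟨Uo, hUo, ?_⟩
      rw [hVdef, ← hUoeq, Subtype.image_preimage_coe]
      rw [Set.inter_comm]
    · exact ⟨V, hVcpt.isClosed, (Set.inter_eq_self_of_subset_left hVC).symm⟩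
  have hVmapsT : Set.MapsTo (firstReturnMap φ C') V T := by
    intro v hv
    rw [hTeq]
    exact ⟨hOsub ⟨(hVsub hv).1.2, hVC' hv⟩, hC'C (hΦmaps v (hVC' hv))⟩
  have hinjV : Set.InjOn (firstReturnMap φ C') V := hinj.mono hVC'
  have hΦcontV : ContinuousOn (firstReturnMap φ C') V := hΦcont.mono hVC'
  refine ⟨V, hyV, hVS, hVclopen, hVmapsT, hinjV, hΦcontV, ?_, hτcont.mono hVC',
    fun v hv => lt_trans hl (hfacts v (hVC' hv)).1⟩
  -- homeomorphism onto the image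
  haveI : CompactSpace V := isCompact_iff_compactSpace.mp hVcpt
  have hcontV : Continuous fun v : V => firstReturnMap φ C' ↑v := hΦcontV.restrict
  have hconte : Continuous ⇑(Equiv.Set.imageOfInjOn (firstReturnMap φ C') V hinjV) :=
    hcontV.subtype_mk _
  exact ⟨hconte.homeoOfEquivCompactToT2, fun v => rfl⟩
end

section
/- Let X be a compact metric space endowed with a free minimal flow φ admitting a Cantor central slice S (i.e. S is the central slice of a flowbox with nonempty interior and S is a Cantor space), with first return map Φ := Φ_S|_S : S → S (a homeomorphism) and continuous first return time τ := τ_S|_S : S → (0,∞). Let X_{(S,Φ,τ)} = (ℝ × S)/∼ be the suspension of (S, Φ) associated to τ, with the quotient topology. Then: every class [t, x] ∈ X_{(S,Φ,τ)} has a unique representative (s, y) with y ∈ S and 0 ≤ s < τ(y); and the map ψ : X_{(S,Φ,τ)} → X determined by ψ([t, y]) = φ_t(y) for y ∈ S and t ∈ ℝ is a well-defined bijection, and moreover a homeomorphism. -/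
open Set

/-- a free minimal flow on a compact metric space with a Cantor central slice
`S` is (equivariantly) homeomorphic to the suspension of the first return map on `S` with
respect to the first return time; every class of the suspension has a unique representative
`(s, y)` with `y ∈ S` and `0 ≤ s < τ(y)`. -/
theorem suspension_homeomorphic {X : Type*} [MetricSpace X] [CompactSpace X]
    (φ : Flow ℝ X) (hfree : φ.IsFree) (hmin : φ.IsMinimal)
    (B : Set X) (l : ℝ) (hB : IsFlowbox φ B l) (hBint : (interior B).Nonempty)
    (S : Set X) (hS : S = centralSlice φ B)
    -- `S` is a Cantor space:
    (hSne : S.Nonempty) (hStd : IsTotallyDisconnected S) (hSperf : Perfect S)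
    -- `Φ` is the first return map, as a homeomorphism of `S`:
    (Φ : S ≃ₜ S) (hΦ : ∀ y : S, (Φ y : X) = firstReturnMap φ S y)
    -- `τ` is the first return time, continuous and strictly positive:
    (τ : S → ℝ) (hτ : ∀ y : S, τ y = firstArriveTime φ S (y : X))
    (hτcont : Continuous τ) (hτpos : ∀ y : S, 0 < τ y)
    -- `r` generates the suspension equivalence relation on `ℝ × S`:
    (r : (ℝ × S) → (ℝ × S) → Prop)
    (hr : ∀ p q : ℝ × S, r p q ↔ ∃ n : ℕ, 1 ≤ n ∧
      ((q.2 = (⇑Φ)^[n] p.2 ∧ p.1 = (∑ i ∈ Finset.range n, τ ((⇑Φ)^[i] p.2)) + q.1) ∨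
       (p.2 = (⇑Φ)^[n] q.2 ∧ q.1 = (∑ i ∈ Finset.range n, τ ((⇑Φ)^[i] q.2)) + p.1))) :
    (∀ z : Quot r, ∃! p : ℝ × S, (0 ≤ p.1 ∧ p.1 < τ p.2) ∧ Quot.mk r p = z) ∧
    ∃ ψ : Quot r ≃ₜ X, ∀ (t : ℝ) (y : S), ψ (Quot.mk r (t, y)) = φ t (y : X) := by
  obtain ⟨hBc, hl, hbox⟩ := hB
  set l2 := l / 2 with hl2def
  have hl2 : 0 < l2 := by rw [hl2def]; linarith
  -- comparison lemma for "visit intervals"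
  have L : ∀ (x : X) (b c ε b' c' : ℝ), b ≤ 0 → 0 ≤ c → 0 < ε →
      (∀ t ∈ Set.Ioo (b - ε) b ∪ Set.Ioo c (c + ε), φ t x ∉ B) →
      b' ≤ 0 → 0 ≤ c' → (∀ t ∈ Set.Icc b' c', φ t x ∈ B) → b ≤ b' ∧ c' ≤ c := by
    intro x b c ε b' c' hb hc hε hout hb' hc' hin
    constructor
    · by_contra h
      push_neg at h
      have hmax : max b' (b - ε / 2) < b := max_lt h (by linarith)
      have h1 : φ (max b' (b - ε / 2)) x ∈ B :=
        hin _ ⟨le_max_left _ _, by linarith⟩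
      exact hout _ (Or.inl ⟨lt_of_lt_of_le (by linarith) (le_max_right _ _), hmax⟩) h1
    · by_contra h
      push_neg at h
      have hmin' : c < min c' (c + ε / 2) := lt_min h (by linarith)
      have h1 : φ (min c' (c + ε / 2)) x ∈ B :=
        hin _ ⟨by linarith, min_le_left _ _⟩
      exact hout _ (Or.inr ⟨hmin', lt_of_le_of_lt (min_le_right _ _) (by linarith)⟩) h1
  -- characterization of the central slice
  have hmemS : ∀ x : X, x ∈ S ↔ x ∈ B ∧ ∀ t ∈ Set.Icc (-l2) l2, φ t x ∈ B := by
    intro x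
    constructor
    · intro hx
      rw [hS] at hx
      obtain ⟨hxB, a, ha0, hin, ε, hε, hout⟩ := hx
      obtain ⟨am, ap, ε', ham, hap, hε', hlen, hin', hout'⟩ := hbox x hxB
      have h1 := L x am ap ε' (-a) a ham hap hε' hout' (by linarith) ha0 hin
      have h2 := L x (-a) a ε am ap (by linarith) ha0 hε hout ham hap hin'
      have ha : a = l2 := by
        have := h1.1; have := h1.2; have := h2.1; have := h2.2
        rw [hl2def]; linarith
      refine ⟨hxB, fun t ht => hin t ?_⟩
      rw [ha]; exact ht
    · rintro ⟨hxB, hin⟩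
      obtain ⟨am, ap, ε', ham, hap, hε', hlen, hin', hout'⟩ := hbox x hxB
      have h1 := L x am ap ε' (-l2) l2 ham hap hε' hout' (by linarith) (by linarith) hin
      have ham' : am = -l2 := by
        have := h1.1; have := h1.2; rw [hl2def] at *; linarith
      have hap' : ap = l2 := by
        have := h1.1; have := h1.2; rw [hl2def] at *; linarith
      rw [hS]
      refine ⟨hxB, l2, hl2.le, fun t ht => hin' t ?_, ε', hε', ?_⟩
      · rw [ham', hap']; exact ht
      · rw [ham', hap'] at hout'; exact hout'
  -- `S` is closed, hence compact
  have hScl : IsClosed S := by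
    have hSeq : S = B ∩ ⋂ t ∈ Set.Icc (-l2) l2, (fun x => φ t x) ⁻¹' B := by
      ext x
      simp only [Set.mem_inter_iff, Set.mem_iInter, Set.mem_preimage]
      exact hmemS x
    rw [hSeq]
    exact hBc.isClosed.inter (isClosed_biInter fun t _ =>
      hBc.isClosed.preimage (φ.continuous continuous_const continuous_id))
  haveI : CompactSpace S := isCompact_iff_compactSpace.mp hScl.isCompact
  obtain ⟨x₀, hx₀⟩ := hSne
  haveI : Nonempty S := ⟨⟨x₀, hx₀⟩⟩
  obtain ⟨y₀, -, hy₀⟩ := isCompact_univ.exists_isMinOn Set.univ_nonempty hτcont.continuousOn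
  obtain ⟨y₁, -, hy₁⟩ := isCompact_univ.exists_isMaxOn Set.univ_nonempty hτcont.continuousOn
  set δ := τ y₀ with hδdef
  have hδ : 0 < δ := hτpos y₀
  have hδle : ∀ y : S, δ ≤ τ y := fun y => hy₀ (Set.mem_univ y)
  have hTle : ∀ y : S, τ y ≤ τ y₁ := fun y => hy₁ (Set.mem_univ y)
  -- `τ x` is a lower bound for the positive hitting times
  have hτmin : ∀ (x : S) (u : ℝ), 0 < u → φ u (x : X) ∈ S → τ x ≤ u := by
    intro x u hu hm
    rw [hτ x]
    exact csInf_le ⟨0, fun t ht => ht.1.le⟩ ⟨hu, hm⟩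
  have hΦcoe : ∀ y : S, ((Φ y : S) : X) = φ (τ y) (y : X) := by
    intro y
    rw [hΦ y]
    show φ (firstArriveTime φ S (y : X)) (y : X) = φ (τ y) (y : X)
    rw [hτ y]
  -- iterates of `Φ` flow along partial sums of `τ`
  have hE : ∀ (n : ℕ) (x : S),
      (((⇑Φ)^[n] x : S) : X) = φ (∑ i ∈ Finset.range n, τ ((⇑Φ)^[i] x)) (x : X) := by
    intro n x
    induction n with
    | zero => simp [φ.map_zero_apply]
    | succ n ih =>
      rw [Finset.sum_range_succ, Function.iterate_succ_apply', hΦcoe ((⇑Φ)^[n] x), ih,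
        ← φ.map_add, add_comm]
  set f : ℝ × S → X := fun p => φ p.1 (p.2 : X) with hfdef
  have hfc : Continuous f := φ.continuous continuous_fst (continuous_subtype_val.comp continuous_snd)
  have hstep : ∀ (p q : ℝ × S) (n : ℕ), q.2 = (⇑Φ)^[n] p.2 →
      p.1 = (∑ i ∈ Finset.range n, τ ((⇑Φ)^[i] p.2)) + q.1 → f p = f q := by
    intro p q n h2 h1
    show φ p.1 (p.2 : X) = φ q.1 (q.2 : X)
    rw [h1, add_comm, φ.map_add, ← hE, ← h2]
  have f_resp : ∀ p q : ℝ × S, r p q → f p = f q := by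
    intro p q hpq
    rw [hr] at hpq
    obtain ⟨n, hn, ⟨h2, h1⟩ | ⟨h2, h1⟩⟩ := hpq
    · exact hstep p q n h2 h1
    · exact (hstep q p n h2 h1).symm
  set g : Quot r → X := Quot.lift f f_resp with hgdef
  have hgc : Continuous g := continuous_quot_lift f_resp hfc
  -- hitting times are exactly partial sums of `τ`
  have hDaux : ∀ (N : ℕ) (x : S) (u : ℝ), 0 < u → u ≤ N * δ → φ u (x : X) ∈ S →
      ∃ n : ℕ, 1 ≤ n ∧ u = ∑ i ∈ Finset.range n, τ ((⇑Φ)^[i] x) := by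
    intro N
    induction N with
    | zero =>
      intro x u hu hN _
      exfalso
      simp only [Nat.cast_zero, zero_mul] at hN
      linarith
    | succ N ih =>
      intro x u hu hN hm
      have h1 : τ x ≤ u := hτmin x u hu hm
      rcases eq_or_lt_of_le h1 with h | h
      · exact ⟨1, le_rfl, by rw [Finset.sum_range_one, Function.iterate_zero_apply, ← h]⟩
      · have hu' : 0 < u - τ x := by linarith
        have hm' : φ (u - τ x) ((Φ x : S) : X) ∈ S := by
          rw [hΦcoe, ← φ.map_add, sub_add_cancel]
          exact hm
        have hN' : u - τ x ≤ N * δ := by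
          have := hδle x
          push_cast at hN ⊢
          linarith
        obtain ⟨n, hn1, hn⟩ := ih (Φ x) (u - τ x) hu' hN' hm'
        refine ⟨n + 1, by omega, ?_⟩
        rw [Finset.sum_range_succ']
        simp only [Function.iterate_succ_apply, Function.iterate_zero_apply] at hn ⊢
        linarith
  have hD : ∀ (x : S) (u : ℝ), 0 < u → φ u (x : X) ∈ S →
      ∃ n : ℕ, 1 ≤ n ∧ u = ∑ i ∈ Finset.range n, τ ((⇑Φ)^[i] x) := by
    intro x u hu hm
    obtain ⟨N, hNn⟩ := exists_nat_ge (u / δ)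
    exact hDaux N x u hu ((div_le_iff₀ hδ).mp hNn) hm
  -- shifting representatives
  have hshift : ∀ p q : ℝ × S, f p = f q → φ (p.1 - q.1) (p.2 : X) = (q.2 : X) := by
    intro p q hfe
    have h0 := congrArg (φ (-q.1)) hfe
    show φ (p.1 - q.1) (p.2 : X) = (q.2 : X)
    rw [show f p = φ p.1 (p.2 : X) from rfl, show f q = φ q.1 (q.2 : X) from rfl] at h0
    rw [← φ.map_add, ← φ.map_add] at h0
    have e1 : -q.1 + q.1 = (0 : ℝ) := by ring
    have e2 : p.1 - q.1 = -q.1 + p.1 := by ring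
    rw [e1, φ.map_zero_apply] at h0
    rw [e2]
    exact h0
  have hmk_of_eq : ∀ p q : ℝ × S, f p = f q → Quot.mk r p = Quot.mk r q := by
    have main : ∀ p q : ℝ × S, q.1 < p.1 → f p = f q → Quot.mk r p = Quot.mk r q := by
      intro p q hlt hfe
      have hy := hshift p q hfe
      have hmem : φ (p.1 - q.1) (p.2 : X) ∈ S := by rw [hy]; exact q.2.2
      obtain ⟨n, hn1, hnT⟩ := hD p.2 (p.1 - q.1) (by linarith) hmem
      apply Quot.sound
      rw [hr]
      refine ⟨n, hn1, Or.inl ⟨?_, by linarith⟩⟩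
      apply Subtype.coe_injective
      show ((q.2 : S) : X) = (((⇑Φ)^[n] p.2 : S) : X)
      rw [hE n p.2, ← hnT, hy]
    intro p q hfe
    rcases lt_trichotomy q.1 p.1 with h | h | h
    · exact main p q h hfe
    · have h2 : (p.2 : X) = (q.2 : X) := by
        have := hshift p q hfe
        rw [h, sub_self, φ.map_zero_apply] at this
        exact this
      have : p = q := Prod.ext h.symm (Subtype.coe_injective h2)
      rw [this]
    · exact (main q p h hfe.symm).symm
  have ginj : Function.Injective g := by
    intro a b hab
    induction a using Quot.ind with | _ p => ?_
    induction b using Quot.ind with | _ q => ?_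
    exact hmk_of_eq p q hab
  -- surjectivity
  have hsliceB : ∀ x ∈ B, ∃ c : ℝ, φ c x ∈ S := by
    intro x hx
    obtain ⟨am, ap, ε, ham, hap, hε, hlen, hin, hout⟩ := hbox x hx
    refine ⟨(am + ap) / 2, ?_⟩
    rw [hS]
    refine ⟨hin _ ⟨by linarith, by linarith⟩, (ap - am) / 2, by linarith, ?_, ε, hε, ?_⟩
    · intro t ht
      rw [← φ.map_add]
      exact hin _ ⟨by linarith [ht.1], by linarith [ht.2]⟩
    · intro t ht
      rw [← φ.map_add]
      rcases ht with h | h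
      · exact hout _ (Or.inl ⟨by linarith [h.1], by linarith [h.2]⟩)
      · exact hout _ (Or.inr ⟨by linarith [h.1], by linarith [h.2]⟩)
  have gsurj : Function.Surjective g := by
    intro z
    obtain ⟨w, hw_orbit, hw_int⟩ := (hmin z).exists_mem_open isOpen_interior hBint
    obtain ⟨t0, ht0, hwz⟩ := hw_orbit
    have hwB : w ∈ B := interior_subset hw_int
    obtain ⟨c, hc⟩ := hsliceB w hwB
    refine ⟨Quot.mk r (-(c + t0), ⟨φ c w, hc⟩), ?_⟩
    show φ (-(c + t0)) (φ c w) = z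
    rw [← hwz, ← φ.map_add, ← φ.map_add]
    have e : -(c + t0) + c + t0 = (0 : ℝ) := by ring
    rw [e, φ.map_zero_apply]
  -- existence of canonical representatives
  have repr_pos : ∀ (N : ℕ) (x : S) (t : ℝ), 0 ≤ t → t ≤ N * δ →
      ∃ q : ℝ × S, (0 ≤ q.1 ∧ q.1 < τ q.2) ∧ Quot.mk r q = Quot.mk r (t, x) := by
    intro N
    induction N with
    | zero =>
      intro x t ht hN
      have ht0 : t = 0 := le_antisymm (by simpa using hN) ht
      exact ⟨(t, x), ⟨ht, by rw [ht0]; exact hτpos x⟩, rfl⟩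
    | succ N ih =>
      intro x t ht hN
      by_cases hlt : t < τ x
      · exact ⟨(t, x), ⟨ht, hlt⟩, rfl⟩
      · push_neg at hlt
        have hrel : r (t, x) (t - τ x, Φ x) := by
          rw [hr]
          refine ⟨1, le_rfl, Or.inl ⟨by simp, ?_⟩⟩
          rw [Finset.sum_range_one, Function.iterate_zero_apply]
          ring
        have hN' : t - τ x ≤ N * δ := by
          have := hδle x
          push_cast at hN ⊢
          linarith
        obtain ⟨q, hq, hqe⟩ := ih (Φ x) (t - τ x) (by linarith) hN'
        exact ⟨q, hq, by rw [hqe]; exact (Quot.sound hrel).symm⟩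
  have repr_nonneg : ∀ (x : S) (t : ℝ), 0 ≤ t →
      ∃ q : ℝ × S, (0 ≤ q.1 ∧ q.1 < τ q.2) ∧ Quot.mk r q = Quot.mk r (t, x) := by
    intro x t ht
    obtain ⟨N, hNn⟩ := exists_nat_ge (t / δ)
    exact repr_pos N x t ht ((div_le_iff₀ hδ).mp hNn)
  have repr_neg : ∀ (N : ℕ) (x : S) (t : ℝ), -(N * δ) ≤ t →
      ∃ q : ℝ × S, (0 ≤ q.1 ∧ q.1 < τ q.2) ∧ Quot.mk r q = Quot.mk r (t, x) := by
    intro N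
    induction N with
    | zero =>
      intro x t ht
      exact repr_nonneg x t (by simpa using ht)
    | succ N ih =>
      intro x t ht
      by_cases h0 : 0 ≤ t
      · exact repr_nonneg x t h0
      · push_neg at h0
        have hrel : r (t, x) (t + τ (Φ.symm x), Φ.symm x) := by
          rw [hr]
          refine ⟨1, le_rfl, Or.inr ⟨by simp, ?_⟩⟩
          rw [Finset.sum_range_one, Function.iterate_zero_apply]
          ring
        have ht' : -(N * δ) ≤ t + τ (Φ.symm x) := by
          have := hδle (Φ.symm x)
          push_cast at ht ⊢
          linarith
        obtain ⟨q, hq, hqe⟩ := ih (Φ.symm x) (t + τ (Φ.symm x)) ht'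
        exact ⟨q, hq, by rw [hqe]; exact (Quot.sound hrel).symm⟩
  have repr_all : ∀ p : ℝ × S,
      ∃ q : ℝ × S, (0 ≤ q.1 ∧ q.1 < τ q.2) ∧ Quot.mk r q = Quot.mk r p := by
    rintro ⟨t, x⟩
    obtain ⟨N, hNn⟩ := exists_nat_ge (-t / δ)
    have : -(N * δ) ≤ t := by
      have := (div_le_iff₀ hδ).mp hNn
      linarith
    exact repr_neg N x t this
  -- uniqueness of canonical representatives
  have huniq : ∀ q q' : ℝ × S, (0 ≤ q.1 ∧ q.1 < τ q.2) → (0 ≤ q'.1 ∧ q'.1 < τ q'.2) →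
      Quot.mk r q = Quot.mk r q' → q = q' := by
    have main : ∀ q q' : ℝ × S, (0 ≤ q.1 ∧ q.1 < τ q.2) → (0 ≤ q'.1 ∧ q'.1 < τ q'.2) →
        f q = f q' → ¬q'.1 < q.1 := by
      intro q q' hq hq' hfe hlt
      have hy := hshift q q' hfe
      have hmem : φ (q.1 - q'.1) (q.2 : X) ∈ S := by rw [hy]; exact q'.2.2
      have := hτmin q.2 (q.1 - q'.1) (by linarith) hmem
      have := hq.2
      have := hq'.1
      linarith
    intro q q' hq hq' hmk
    have hfe : f q = f q' := congrArg g hmk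
    rcases lt_trichotomy q.1 q'.1 with h | h | h
    · exact absurd h (main q' q hq' hq hfe.symm)
    · have h2 : (q.2 : X) = (q'.2 : X) := by
        have := hshift q q' hfe
        rw [h, sub_self, φ.map_zero_apply] at this
        exact this
      exact Prod.ext h (Subtype.coe_injective h2)
    · exact absurd h (main q q' hq hq' hfe)
  constructor
  · intro z
    obtain ⟨p, hp⟩ := Quot.exists_rep z
    obtain ⟨q, hq, hqe⟩ := repr_all p
    refine ⟨q, ⟨hq, hqe.trans hp⟩, ?_⟩
    rintro q' ⟨hq', hq'e⟩
    exact huniq q' q hq' hq (by rw [hq'e]; exact (hqe.trans hp).symm)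
  · haveI : CompactSpace (Quot r) := by
      refine ⟨?_⟩
      have himg : Quot.mk r '' (Set.Icc 0 (τ y₁) ×ˢ (Set.univ : Set S)) = Set.univ :=
        Set.eq_univ_of_forall fun z => by
          obtain ⟨p, hp⟩ := Quot.exists_rep z
          obtain ⟨q, hq, hqe⟩ := repr_all p
          exact ⟨q, ⟨⟨hq.1, (hq.2.trans_le (hTle q.2)).le⟩, Set.mem_univ _⟩, hqe.trans hp⟩
      rw [← himg]
      exact (isCompact_Icc.prod isCompact_univ).image continuous_quot_mk
    have hbij : Function.Bijective g := ⟨ginj, gsurj⟩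
    refine ⟨Continuous.homeoOfEquivCompactToT2 (f := Equiv.ofBijective g hbij) hgc, ?_⟩
    intro t y
    rfl
end

section
/- Let Φ be a minimal homeomorphism of a Cantor space S and let S' ⊆ S be a nonempty clopen subset, with induced first return map Φ' : S' → S'. Let f : S → ℤ be continuous and vanishing outside Φ^{-1}(S'). Then for every y ∈ S', ι(f)((Φ')^{-1}(y)) = ι(f ∘ Φ^{-1})(y); that is, ι(f) ∘ (Φ')^{-1} = ι(f ∘ Φ^{-1}) as functions on S'. -/
open Set

/-- First return time of `Φ` to the set `T`: `min {n ≥ 1 | Φⁿ(y) ∈ T}`. -/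
noncomputable def retTime {S : Type*} (Φ : S → S) (T : Set S) (y : S) : ℕ :=
  sInf {n : ℕ | 1 ≤ n ∧ Φ^[n] y ∈ T}

/-- Induced (first return) map of `Φ` on the set `T`: `y ↦ Φ^{retTime}(y)`. -/
noncomputable def indMap {S : Type*} (Φ : S → S) (T : Set S) (y : S) : S :=
  Φ^[retTime Φ T y] y

/-- A homeomorphism is *minimal* if every orbit is dense. -/
def Homeomorph.IsMinimal {S : Type*} [TopologicalSpace S] (Φ : S ≃ₜ S) : Prop :=
  ∀ x : S, Dense {y : S | ∃ n : ℕ, (⇑Φ)^[n] x = y ∨ (⇑Φ.symm)^[n] x = y}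

-- every point returns (forward) to S'
lemma exists_return {S : Type*} [TopologicalSpace S] [CompactSpace S]
    (Φ : S ≃ₜ S) (hmin : Φ.IsMinimal)
    (S' : Set S) (hS' : IsClopen S') (hne : S'.Nonempty) :
    ∀ x : S, ∃ m : ℕ, 1 ≤ m ∧ (⇑Φ)^[m] x ∈ S' := by
  set C : ℕ → Set S := fun n => (⇑Φ)^[n] ⁻¹' S' ∪ (⇑Φ.symm)^[n] ⁻¹' S' with hC
  have hopen : ∀ n, IsOpen (C n) := fun n =>
    (hS'.isOpen.preimage (Φ.continuous.iterate n)).union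
      (hS'.isOpen.preimage (Φ.symm.continuous.iterate n))
  have hcover : (univ : Set S) ⊆ ⋃ n, C n := by
    intro x _
    obtain ⟨w, hworb, hwS⟩ := (hmin x).exists_mem_open hS'.isOpen hne
    obtain ⟨n, hn⟩ := hworb
    rcases hn with h | h
    · exact mem_iUnion.2 ⟨n, Or.inl (by simp only [mem_preimage, h]; exact hwS)⟩
    · exact mem_iUnion.2 ⟨n, Or.inr (by simp only [mem_preimage, h]; exact hwS)⟩
  obtain ⟨t, ht⟩ := isCompact_univ.elim_finite_subcover C hopen hcover
  intro x
  set N : ℕ := t.sup id + 1 with hN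
  have hx : (⇑Φ)^[N] x ∈ ⋃ n ∈ t, C n := ht (mem_univ _)
  obtain ⟨n, hnt, hn⟩ := mem_iUnion₂.1 hx
  rcases hn with h | h
  · refine ⟨n + N, by omega, ?_⟩
    have h' : (⇑Φ)^[n] ((⇑Φ)^[N] x) ∈ S' := h
    rwa [← Function.iterate_add_apply] at h'
  · have hnN : n ≤ t.sup id := Finset.le_sup (f := id) hnt
    refine ⟨N - n, by omega, ?_⟩
    have hsplit : (⇑Φ)^[N] x = (⇑Φ)^[n] ((⇑Φ)^[N - n] x) := by
      rw [← Function.iterate_add_apply]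
      congr 1; omega
    have hli : Function.LeftInverse ((⇑Φ.symm)^[n]) ((⇑Φ)^[n]) :=
      Function.LeftInverse.iterate Φ.symm_apply_apply n
    have h' : (⇑Φ.symm)^[n] ((⇑Φ)^[N] x) ∈ S' := h
    rw [hsplit, hli] at h'
    exact h'


/-- if a continuous `f : S → ℤ` vanishes outside `Φ⁻¹(S')`, then
`ι(f) ∘ (Φ')⁻¹ = ι(f ∘ Φ⁻¹)` on `S'`, where `Φ'` is the induced first return map on `S'`. -/
theorem sum_over_tower_shift {S : Type*} [TopologicalSpace S] [CompactSpace S]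
    [TopologicalSpace.MetrizableSpace S] [TotallyDisconnectedSpace S] [Nonempty S]
    [PerfectSpace S]
    (Φ : S ≃ₜ S) (hmin : Φ.IsMinimal)
    (S' : Set S) (hS' : IsClopen S') (hne : S'.Nonempty)
    (f : S → ℤ) (hf : Continuous f) (hf0 : ∀ y : S, Φ y ∉ S' → f y = 0) :
    ∀ y ∈ S', ∀ z ∈ S', indMap (⇑Φ) S' z = y →
      ∑ k ∈ Finset.range (retTime (⇑Φ) S' z), f ((⇑Φ)^[k] z)
        = ∑ k ∈ Finset.range (retTime (⇑Φ) S' y), f (Φ.symm ((⇑Φ)^[k] y)) := by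
  intro y hy z hz hzy
  have hret := exists_return Φ hmin S' hS' hne
  set τz := retTime (⇑Φ) S' z with hτz
  set τy := retTime (⇑Φ) S' y with hτy
  have hzne : {n : ℕ | 1 ≤ n ∧ (⇑Φ)^[n] z ∈ S'}.Nonempty := hret z
  have hyne : {n : ℕ | 1 ≤ n ∧ (⇑Φ)^[n] y ∈ S'}.Nonempty := hret y
  have hzmem := Nat.sInf_mem hzne
  have hymem := Nat.sInf_mem hyne
  have hτz1 : 1 ≤ τz := hzmem.1
  have hτy1 : 1 ≤ τy := hymem.1
  have hznot : ∀ k, 1 ≤ k → k < τz → (⇑Φ)^[k] z ∉ S' := by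
    intro k h1 h2 hk
    exact Nat.notMem_of_lt_sInf h2 ⟨h1, hk⟩
  have hynot : ∀ k, 1 ≤ k → k < τy → (⇑Φ)^[k] y ∉ S' := by
    intro k h1 h2 hk
    exact Nat.notMem_of_lt_sInf h2 ⟨h1, hk⟩
  -- LHS = f (Φ^[τz-1] z)
  have hL : ∑ k ∈ Finset.range τz, f ((⇑Φ)^[k] z) = f ((⇑Φ)^[τz - 1] z) := by
    rw [Finset.sum_eq_single (τz - 1)]
    · intro b hb hbne
      have hb' : b < τz := Finset.mem_range.1 hb
      apply hf0
      have : Φ ((⇑Φ)^[b] z) = (⇑Φ)^[b + 1] z := (Function.iterate_succ_apply' (⇑Φ) b z).symm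
      rw [this]
      exact hznot (b + 1) (by omega) (by omega)
    · intro h
      exact absurd (Finset.mem_range.2 (by omega)) h
  -- RHS = f (Φ.symm y)
  have hR : ∑ k ∈ Finset.range τy, f (Φ.symm ((⇑Φ)^[k] y)) = f (Φ.symm y) := by
    rw [Finset.sum_eq_single 0]
    · simp
    · intro b hb hbne
      have hb' : b < τy := Finset.mem_range.1 hb
      apply hf0
      rw [Φ.apply_symm_apply]
      exact hynot b (by omega) hb'
    · intro h
      exact absurd (Finset.mem_range.2 (by omega)) h
  rw [hL, hR]
  congr 1
  have : y = (⇑Φ)^[τz] z := hzy.symm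
  have hsucc : (⇑Φ)^[τz] z = Φ ((⇑Φ)^[τz - 1] z) := by
    conv_lhs => rw [show τz = (τz - 1) + 1 by omega]
    exact Function.iterate_succ_apply' (⇑Φ) (τz - 1) z
  rw [this, hsucc, Φ.symm_apply_apply]
end

section
/- Let Φ be a minimal homeomorphism of a Cantor space S and let S' ⊆ S be a nonempty clopen subset. For every continuous function g : S' → ℤ there exists a continuous function f : S → ℤ vanishing outside Φ^{-1}(S') such that ι(f) = g, i.e. Σ_{k=0}^{τ(y)−1} f(Φᵏ(y)) = g(y) for every y ∈ S'. -/
open Set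

lemma symm_iter_iter {S : Type*} [TopologicalSpace S] (Φ : S ≃ₜ S) {m n : ℕ}
    (h : m ≤ n) (x : S) : (⇑Φ.symm)^[m] ((⇑Φ)^[n] x) = (⇑Φ)^[n - m] x := by
  have h1 : (⇑Φ)^[n] x = (⇑Φ)^[m] ((⇑Φ)^[n - m] x) := by
    rw [← Function.iterate_add_apply]
    congr 1
    omega
  rw [h1]
  exact Function.LeftInverse.iterate Φ.symm_apply_apply m _

lemma iter_symm_iter {S : Type*} [TopologicalSpace S] (Φ : S ≃ₜ S) {m n : ℕ}
    (h : m ≤ n) (x : S) : (⇑Φ)^[m] ((⇑Φ.symm)^[n] x) = (⇑Φ.symm)^[n - m] x := by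
  have := symm_iter_iter Φ.symm h x
  simpa using this

lemma retTime_spec {S : Type*} (Φ : S → S) (T : Set S) (y : S)
    (h : ∃ n, 1 ≤ n ∧ Φ^[n] y ∈ T) :
    1 ≤ retTime Φ T y ∧ Φ^[retTime Φ T y] y ∈ T ∧
      ∀ k, 1 ≤ k → k < retTime Φ T y → Φ^[k] y ∉ T := by
  have hmem := Nat.sInf_mem (s := {n : ℕ | 1 ≤ n ∧ Φ^[n] y ∈ T}) h
  exact ⟨hmem.1, hmem.2, fun k h1 h2 hk => Nat.notMem_of_lt_sInf h2 ⟨h1, hk⟩⟩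

lemma retTime_eq {S : Type*} (Φ : S → S) (T : Set S) (y : S) (n : ℕ)
    (h1 : 1 ≤ n) (h2 : Φ^[n] y ∈ T) (h3 : ∀ k, 1 ≤ k → k < n → Φ^[k] y ∉ T) :
    retTime Φ T y = n := by
  have hle : retTime Φ T y ≤ n := Nat.sInf_le ⟨h1, h2⟩
  have hmem := Nat.sInf_mem (s := {m : ℕ | 1 ≤ m ∧ Φ^[m] y ∈ T}) ⟨n, h1, h2⟩
  rcases lt_or_eq_of_le hle with hlt | heq
  · exact absurd hmem.2 (h3 _ hmem.1 hlt)
  · exact heq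

lemma orbit_hits {S : Type*} [TopologicalSpace S] [CompactSpace S]
    (Φ : S ≃ₜ S) (hmin : Φ.IsMinimal) (S' : Set S) (hS' : IsClopen S') (hne : S'.Nonempty) :
    (∀ x : S, ∃ n, 1 ≤ n ∧ (⇑Φ)^[n] x ∈ S') ∧
    (∀ x : S, ∃ n, 1 ≤ n ∧ (⇑Φ.symm)^[n] x ∈ S') := by
  set U : ℕ → Set S := fun n => (⇑Φ)^[n] ⁻¹' S' ∪ (⇑Φ.symm)^[n] ⁻¹' S' with hU
  have hUopen : ∀ n, IsOpen (U n) := fun n =>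
    (hS'.isOpen.preimage (Φ.continuous.iterate n)).union
      (hS'.isOpen.preimage (Φ.symm.continuous.iterate n))
  have hcover : univ ⊆ ⋃ n, U n := by
    intro x _
    obtain ⟨y, ⟨n, hn⟩, hyS'⟩ := (hmin x).exists_mem_open hS'.isOpen hne
    rcases hn with hn | hn
    · exact mem_iUnion.mpr ⟨n, Or.inl (by simp [hU, hn, hyS'])⟩
    · exact mem_iUnion.mpr ⟨n, Or.inr (by simp [hU, hn, hyS'])⟩
  obtain ⟨t, ht⟩ := isCompact_univ.elim_finite_subcover U hUopen hcover
  set N := t.sup id with hN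
  have hbound : ∀ x : S, ∃ n ≤ N, x ∈ U n := by
    intro x
    have := ht (mem_univ x)
    simp only [mem_iUnion] at this
    obtain ⟨n, hnt, hxn⟩ := this
    exact ⟨n, Finset.le_sup (f := id) hnt, hxn⟩
  constructor
  · intro x
    obtain ⟨n, hnN, hx⟩ := hbound ((⇑Φ)^[N + 1] x)
    rcases hx with hx | hx
    · refine ⟨n + (N + 1), by omega, ?_⟩
      rwa [Function.iterate_add_apply]
    · refine ⟨N + 1 - n, by omega, ?_⟩
      have := symm_iter_iter Φ (n := N + 1) (m := n) (by omega) x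
      rw [← this]
      exact hx
  · intro x
    obtain ⟨n, hnN, hx⟩ := hbound ((⇑Φ.symm)^[N + 1] x)
    rcases hx with hx | hx
    · refine ⟨N + 1 - n, by omega, ?_⟩
      have := iter_symm_iter Φ (n := N + 1) (m := n) (by omega) x
      rw [← this]
      exact hx
    · refine ⟨n + (N + 1), by omega, ?_⟩
      rwa [Function.iterate_add_apply]

/-- every continuous `g : S' → ℤ` is of the form `ι(f)` for some continuous
`f : S → ℤ` vanishing outside `Φ⁻¹(S')`. -/
theorem exists_preimage_of_sum_over_tower {S : Type*} [TopologicalSpace S] [CompactSpace S]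
    [TopologicalSpace.MetrizableSpace S] [TotallyDisconnectedSpace S] [Nonempty S]
    [PerfectSpace S]
    (Φ : S ≃ₜ S) (hmin : Φ.IsMinimal)
    (S' : Set S) (hS' : IsClopen S') (hne : S'.Nonempty)
    (g : S' → ℤ) (hg : Continuous g) :
    ∃ f : S → ℤ, Continuous f ∧ (∀ y : S, Φ y ∉ S' → f y = 0) ∧
      ∀ y : S', ∑ k ∈ Finset.range (retTime (⇑Φ) S' (y : S)), f ((⇑Φ)^[k] (y : S)) = g y := by
  classical
  obtain ⟨hfwd, hbwd⟩ := orbit_hits Φ hmin S' hS' hne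
  have hmem : ∀ x : S, indMap (⇑Φ.symm) S' x ∈ S' :=
    fun x => (retTime_spec (⇑Φ.symm) S' x (hbwd x)).2.1
  set G : S → ℤ := fun x => if x ∈ S' then g ⟨indMap (⇑Φ.symm) S' x, hmem x⟩ else 0 with hGdef
  have hG0 : ∀ x : S, x ∉ S' → G x = 0 := fun x hx => if_neg hx
  have hGval : ∀ x : S, ∀ hx : x ∈ S', G x = g ⟨indMap (⇑Φ.symm) S' x, hmem x⟩ :=
    fun x hx => if_pos hx
  have hGcont : Continuous G := by
    refine ((IsLocallyConstant.iff_exists_open G).mpr ?_).continuous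
    intro x
    by_cases hx : x ∈ S'
    · set m := retTime (⇑Φ.symm) S' x with hm
      obtain ⟨hm1, hmS, hmmin⟩ := retTime_spec (⇑Φ.symm) S' x (hbwd x)
      set p : S := (⇑Φ.symm)^[m] x with hp
      have hpS' : p ∈ S' := hmS
      have hopen : IsOpen (g ⁻¹' {g ⟨p, hpS'⟩}) := (isOpen_discrete _).preimage hg
      obtain ⟨W, hWopen, hWpre⟩ := isOpen_induced_iff.mp hopen
      have key : ∀ (q : S) (hq1 : q ∈ S'), q ∈ W → g ⟨q, hq1⟩ = g ⟨p, hpS'⟩ := by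
        intro q hq1 hq2
        have : (⟨q, hq1⟩ : S') ∈ Subtype.val ⁻¹' W := hq2
        rw [hWpre] at this
        exact this
      have hpW : p ∈ W := by
        have : (⟨p, hpS'⟩ : S') ∈ g ⁻¹' {g ⟨p, hpS'⟩} := rfl
        rw [← hWpre] at this
        exact this
      refine ⟨S' ∩ (⋂ k ∈ Finset.Ico 1 m, (⇑Φ.symm)^[k] ⁻¹' S'ᶜ) ∩
        ((⇑Φ.symm)^[m] ⁻¹' (W ∩ S')), ?_, ?_, ?_⟩
      · refine ((hS'.isOpen.inter (isOpen_biInter_finset fun k _ => ?_)).inter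
          ((hWopen.inter hS'.isOpen).preimage (Φ.symm.continuous.iterate m)))
        exact hS'.isClosed.isOpen_compl.preimage (Φ.symm.continuous.iterate k)
      · refine ⟨⟨hx, ?_⟩, hpW, hpS'⟩
        refine mem_iInter₂.mpr fun k hk => ?_
        simp only [Finset.mem_Ico] at hk
        exact hmmin k hk.1 hk.2
      · rintro w ⟨⟨hwS', hwmid⟩, hwW, hwS2⟩
        have hwret : retTime (⇑Φ.symm) S' w = m := by
          refine retTime_eq _ _ _ _ hm1 hwS2 fun k h1 h2 => ?_
          exact mem_iInter₂.mp hwmid k (Finset.mem_Ico.mpr ⟨h1, h2⟩)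
        have hiw : indMap (⇑Φ.symm) S' w = (⇑Φ.symm)^[m] w := by
          rw [indMap, hwret]
        have hix : indMap (⇑Φ.symm) S' x = p := rfl
        rw [hGval w hwS', hGval x hx]
        calc g ⟨indMap (⇑Φ.symm) S' w, hmem w⟩
            = g ⟨(⇑Φ.symm)^[m] w, hwS2⟩ := congrArg g (Subtype.ext hiw)
          _ = g ⟨p, hpS'⟩ := key _ hwS2 hwW
          _ = g ⟨indMap (⇑Φ.symm) S' x, hmem x⟩ := (congrArg g (Subtype.ext hix)).symm
    · exact ⟨S'ᶜ, hS'.isClosed.isOpen_compl, hx, fun w hw => by rw [hG0 w hw, hG0 x hx]⟩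
  refine ⟨fun z => G (Φ z), hGcont.comp Φ.continuous, fun y hy => hG0 (Φ y) hy, ?_⟩
  intro y
  set n := retTime (⇑Φ) S' (y : S) with hn
  obtain ⟨hn1, hnS, hnmin⟩ := retTime_spec (⇑Φ) S' (y : S) (hfwd (y : S))
  rw [Finset.sum_eq_single_of_mem (n - 1) (Finset.mem_range.mpr (by omega)) ?_]
  · have h1 : Φ ((⇑Φ)^[n - 1] (y : S)) = (⇑Φ)^[n] (y : S) := by
      have he : n = (n - 1) + 1 := by omega
      conv_rhs => rw [he]
      rw [Function.iterate_succ_apply']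
    show G (Φ ((⇑Φ)^[n - 1] (y : S))) = g y
    rw [h1, hGval _ hnS]
    have hret : retTime (⇑Φ.symm) S' ((⇑Φ)^[n] (y : S)) = n := by
      refine retTime_eq _ _ _ _ hn1 ?_ ?_
      · rw [symm_iter_iter Φ le_rfl]
        simp only [Nat.sub_self, Function.iterate_zero, id_eq]
        exact y.2
      · intro k h1k h2k hk
        rw [symm_iter_iter Φ (le_of_lt h2k)] at hk
        exact hnmin (n - k) (by omega) (by omega) hk
    have him : indMap (⇑Φ.symm) S' ((⇑Φ)^[n] (y : S)) = (y : S) := by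
      rw [indMap, hret, symm_iter_iter Φ le_rfl]
      simp
    exact congrArg g (Subtype.ext him)
  · intro b hb hbne
    show G (Φ ((⇑Φ)^[b] (y : S))) = 0
    rw [(Function.iterate_succ_apply' (⇑Φ) b (y : S)).symm]
    apply hG0
    have hbn : b < n := Finset.mem_range.mp hb
    exact hnmin (b + 1) (by omega) (by omega)
end

section
/- Let Φ be a minimal homeomorphism of a Cantor space S₀ and let S₀ ⊇ S₁ ⊇ S₂ ⊇ ⋯ be a nested sequence of nonempty clopen subsets. For each n let Φ_n : S_n → S_n be the induced first return map of Φ on S_n (with Φ₀ = Φ), and define t_n : S_{n+1} → S_n by t_n(y) = Φ_n^{σ_n(y)−1}(y), where σ_n(y) = min{m ≥ 1 : Φ_n^m(y) ∈ S_{n+1}}. Then for all n, k ∈ ℕ: (t_n ∘ t_{n+1} ∘ ⋯ ∘ t_{n+k})({y ∈ S_{n+k+1} : Φ_{n+k+1}(y) ∈ S_{n+k+2}}) = {z ∈ S_n : Φ_n(z) ∈ S_{n+k+2}}. -/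
open Set

/-- The map `t_n : S_{n+1} → S_n`, `t_n(y) = Φ_n^{σ_n(y)−1}(y)`, where `Φ_n` is the induced
first return map of `Φ` on `A n` and `σ_n` is the first return time of `Φ_n` to `A (n+1)`. -/
noncomputable def tMap {S : Type*} (Φ : S → S) (A : ℕ → Set S) (n : ℕ) (y : S) : S :=
  (indMap Φ (A n))^[retTime (indMap Φ (A n)) (A (n + 1)) y - 1] y

/-- The composition `t_n ∘ t_{n+1} ∘ ⋯ ∘ t_{n+k}`. -/
noncomputable def tComp {S : Type*} (Φ : S → S) (A : ℕ → Set S) (n : ℕ) : ℕ → S → S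
  | 0 => tMap Φ A n
  | k + 1 => tMap Φ A n ∘ tComp Φ A (n + 1) k

/-! ### Auxiliary lemmas -/

section PureDynamics

variable {S : Type*} {f : S → S} {T T' : Set S}

lemma retTime_min' {y : S} {j : ℕ} (h1 : 1 ≤ j) (hj : j < retTime f T y) :
    f^[j] y ∉ T := fun hm => Nat.notMem_of_lt_sInf hj ⟨h1, hm⟩

lemma retTime_pos' (hR : ∀ x, {m : ℕ | 1 ≤ m ∧ f^[m] x ∈ T}.Nonempty) (y : S) :
    1 ≤ retTime f T y := (Nat.sInf_mem (hR y)).1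

lemma indMap_mem' (hR : ∀ x, {m : ℕ | 1 ≤ m ∧ f^[m] x ∈ T}.Nonempty) (y : S) :
    indMap f T y ∈ T := (Nat.sInf_mem (hR y)).2

/-- The cumulative return times: `(indMap f T)^[m] y = f^[cseq f T y m] y`. -/
noncomputable def cseq (f : S → S) (T : Set S) (y : S) : ℕ → ℕ
  | 0 => 0
  | m + 1 => cseq f T y m + retTime f T ((indMap f T)^[m] y)

lemma iter_indMap (f : S → S) (T : Set S) (y : S) (m : ℕ) :
    (indMap f T)^[m] y = f^[cseq f T y m] y := by
  induction m with
  | zero => rfl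
  | succ m ih =>
    have hc : cseq f T y (m + 1) = cseq f T y m + retTime f T ((indMap f T)^[m] y) := rfl
    rw [Function.iterate_succ_apply', hc, Nat.add_comm, Function.iterate_add_apply, ← ih]
    rfl

lemma cseq_strictMono (hR : ∀ x, {m : ℕ | 1 ≤ m ∧ f^[m] x ∈ T}.Nonempty) (y : S) :
    StrictMono (cseq f T y) := by
  apply strictMono_nat_of_lt_succ
  intro m
  have h := retTime_pos' hR ((indMap f T)^[m] y)
  have hc : cseq f T y (m + 1) = cseq f T y m + retTime f T ((indMap f T)^[m] y) := rfl
  omega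

lemma cseq_mem (hR : ∀ x, {m : ℕ | 1 ≤ m ∧ f^[m] x ∈ T}.Nonempty) (y : S) (m : ℕ) :
    f^[cseq f T y (m + 1)] y ∈ T := by
  rw [← iter_indMap, Function.iterate_succ_apply']
  exact indMap_mem' hR _

lemma notMem_between (hR : ∀ x, {m : ℕ | 1 ≤ m ∧ f^[m] x ∈ T}.Nonempty) (y : S)
    {m j : ℕ} (h1 : cseq f T y m < j) (h2 : j < cseq f T y (m + 1)) :
    f^[j] y ∉ T := by
  have hc : cseq f T y (m + 1) = cseq f T y m + retTime f T ((indMap f T)^[m] y) := rfl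
  have hd : j = (j - cseq f T y m) + cseq f T y m := by omega
  rw [hd, Function.iterate_add_apply, ← iter_indMap]
  exact retTime_min' (by omega) (by omega)

lemma eq_cseq_of_mem (hR : ∀ x, {m : ℕ | 1 ≤ m ∧ f^[m] x ∈ T}.Nonempty) (y : S)
    {j : ℕ} (h1 : 1 ≤ j) (hj : f^[j] y ∈ T) :
    ∃ m, 1 ≤ m ∧ j = cseq f T y m := by
  have hP : ∃ M, j < cseq f T y M :=
    ⟨j + 1, lt_of_lt_of_le (Nat.lt_succ_self j) (cseq_strictMono hR y).le_apply⟩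
  have hM0 : Nat.find hP ≠ 0 := by
    intro h
    have := Nat.find_spec hP
    rw [h] at this
    simp only [cseq] at this
    omega
  obtain ⟨m, hm⟩ := Nat.exists_eq_succ_of_ne_zero hM0
  have hspec : j < cseq f T y (m + 1) := by
    have := Nat.find_spec hP
    rwa [hm] at this
  have hle : cseq f T y m ≤ j := by
    by_contra h
    exact Nat.find_min hP (by rw [hm]; exact Nat.lt_succ_self m) (by omega)
  rcases Nat.eq_or_lt_of_le hle with he | hlt
  · refine ⟨m, ?_, he.symm⟩
    rcases Nat.eq_zero_or_pos m with rfl | h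
    · simp only [cseq] at he; omega
    · exact h
  · exact absurd hj (notMem_between hR y hlt hspec)

/-- Induced map of the induced map: `indMap (indMap f T) T' = indMap f T'` on all of `S`,
together with nonemptiness of the return-time set of `indMap f T` to `T'`. -/
lemma retTime_ind (hR : ∀ x, {m : ℕ | 1 ≤ m ∧ f^[m] x ∈ T}.Nonempty) (hsub : T' ⊆ T)
    (hR' : ∀ x, {m : ℕ | 1 ≤ m ∧ f^[m] x ∈ T'}.Nonempty) (y : S) :
    indMap (indMap f T) T' y = indMap f T' y ∧
      {m : ℕ | 1 ≤ m ∧ (indMap f T)^[m] y ∈ T'}.Nonempty := by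
  set ρ := retTime f T' y with hρdef
  have hρ : 1 ≤ ρ ∧ f^[ρ] y ∈ T' := Nat.sInf_mem (hR' y)
  obtain ⟨M, hM1, hMc⟩ := eq_cseq_of_mem hR y hρ.1 (hsub hρ.2)
  have hFM : (indMap f T)^[M] y ∈ T' := by rw [iter_indMap, ← hMc]; exact hρ.2
  have hne : {m : ℕ | 1 ≤ m ∧ (indMap f T)^[m] y ∈ T'}.Nonempty := by
    exact ⟨M, hM1, hFM⟩
  refine ⟨?_, hne⟩
  have hMeq : retTime (indMap f T) T' y = M := by
    apply le_antisymm (Nat.sInf_le (show M ∈ {m : ℕ | 1 ≤ m ∧ (indMap f T)^[m] y ∈ T'} from ⟨hM1, hFM⟩))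
    by_contra h
    push_neg at h
    have hm := Nat.sInf_mem hne
    set m := retTime (indMap f T) T' y with hmdef
    have hmem : f^[cseq f T y m] y ∈ T' := by rw [← iter_indMap]; exact hm.2
    have h1 : 1 ≤ cseq f T y m := le_trans hm.1 (cseq_strictMono hR y).le_apply
    have h2 : cseq f T y m < ρ := hMc ▸ (cseq_strictMono hR y) h
    exact retTime_min' h1 h2 hmem
  show (indMap f T)^[retTime (indMap f T) T' y] y = f^[ρ] y
  rw [hMeq, iter_indMap, ← hMc]

lemma indMap_injOn (hf : Function.Injective f)
    (hR : ∀ x, {m : ℕ | 1 ≤ m ∧ f^[m] x ∈ T}.Nonempty) :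
    Set.InjOn (indMap f T) T := by
  have aux : ∀ z₁ z₂ : S, z₁ ∈ T → retTime f T z₁ ≤ retTime f T z₂ →
      indMap f T z₁ = indMap f T z₂ → z₁ = z₂ := by
    intro z₁ z₂ h₁ hle heq
    have h2 : f^[retTime f T z₂] z₂ = f^[retTime f T z₁] (f^[retTime f T z₂ - retTime f T z₁] z₂) := by
      rw [← Function.iterate_add_apply]
      congr 1
      omega
    have heq' : f^[retTime f T z₁] z₁ = f^[retTime f T z₂] z₂ := heq
    have h3 : z₁ = f^[retTime f T z₂ - retTime f T z₁] z₂ :=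
      (hf.iterate (retTime f T z₁)) (heq'.trans h2)
    rcases Nat.eq_or_lt_of_le hle with he | hlt
    · rw [h3, ← he, Nat.sub_self, Function.iterate_zero_apply]
    · have hpos := retTime_pos' hR z₂
      have hpos1 := retTime_pos' hR z₁
      exact absurd (h3 ▸ h₁) (retTime_min' (by omega) (by omega))
  intro z₁ h₁ z₂ h₂ heq
  rcases le_total (retTime f T z₁) (retTime f T z₂) with h | h
  · exact aux z₁ z₂ h₁ h heq
  · exact (aux z₂ z₁ h₂ h heq.symm).symm

end PureDynamics

section Topo

variable {S : Type*} [TopologicalSpace S] [CompactSpace S]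

lemma exists_ret (Φ : S ≃ₜ S) (hmin : Φ.IsMinimal)
    {T : Set S} (hT : IsClopen T) (hTne : T.Nonempty) (y : S) :
    {n : ℕ | 1 ≤ n ∧ (⇑Φ)^[n] y ∈ T}.Nonempty := by
  have hop : ∀ m : ℕ, IsOpen ((⇑Φ)^[m] ⁻¹' T ∪ (⇑Φ.symm)^[m] ⁻¹' T) := fun m =>
    (hT.isOpen.preimage (Φ.continuous.iterate m)).union
      (hT.isOpen.preimage (Φ.continuous_symm.iterate m))
  have hcov : (univ : Set S) ⊆ ⋃ m : ℕ, ((⇑Φ)^[m] ⁻¹' T ∪ (⇑Φ.symm)^[m] ⁻¹' T) := by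
    intro x _
    obtain ⟨z, ⟨n, hn⟩, hzT⟩ := (hmin x).exists_mem_open hT.isOpen hTne
    rcases hn with hn | hn
    · exact mem_iUnion.2 ⟨n, Or.inl (by rw [mem_preimage, hn]; exact hzT)⟩
    · exact mem_iUnion.2 ⟨n, Or.inr (by rw [mem_preimage, hn]; exact hzT)⟩
  obtain ⟨s, hs⟩ := isCompact_univ.elim_finite_subcover _ hop hcov
  set N := s.sup id with hN
  have hx := hs (mem_univ ((⇑Φ)^[N + 1] y))
  rw [mem_iUnion₂] at hx
  obtain ⟨m, hms, hm⟩ := hx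
  have hmN : m ≤ N := Finset.le_sup (f := id) hms
  rcases hm with hm | hm
  · refine ⟨m + (N + 1), by omega, ?_⟩
    rw [Function.iterate_add_apply]
    exact hm
  · refine ⟨N + 1 - m, by omega, ?_⟩
    have h1 : (⇑Φ)^[N + 1] y = (⇑Φ)^[m] ((⇑Φ)^[N + 1 - m] y) := by
      rw [← Function.iterate_add_apply]
      congr 1
      omega
    have h2 : (⇑Φ.symm)^[m] ((⇑Φ)^[N + 1] y) = (⇑Φ)^[N + 1 - m] y := by
      rw [h1]
      exact (Function.LeftInverse.iterate Φ.symm_apply_apply m) _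
    rwa [mem_preimage, h2] at hm

lemma Homeomorph.IsMinimal.symm' {Φ : S ≃ₜ S} (hmin : Φ.IsMinimal) : Φ.symm.IsMinimal := by
  intro x
  apply Dense.mono ?_ (hmin x)
  rintro y ⟨n, h | h⟩
  · exact ⟨n, Or.inr (by simpa using h)⟩
  · exact ⟨n, Or.inl h⟩

lemma indMap_surjOn (Φ : S ≃ₜ S) (hmin : Φ.IsMinimal)
    {T : Set S} (hT : IsClopen T) (hTne : T.Nonempty) {w : S} (hw : w ∈ T) :
    ∃ y ∈ T, indMap (⇑Φ) T y = w := by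
  have hRs := exists_ret Φ.symm hmin.symm' hT hTne w
  have hRy := exists_ret Φ hmin hT hTne
  set k := retTime (⇑Φ.symm) T w with hk
  have hkspec : 1 ≤ k ∧ (⇑Φ.symm)^[k] w ∈ T := Nat.sInf_mem hRs
  refine ⟨(⇑Φ.symm)^[k] w, hkspec.2, ?_⟩
  have hinv : ∀ j ≤ k, (⇑Φ)^[j] ((⇑Φ.symm)^[k] w) = (⇑Φ.symm)^[k - j] w := by
    intro j hj
    have h1 : (⇑Φ.symm)^[k] w = (⇑Φ.symm)^[j] ((⇑Φ.symm)^[k - j] w) := by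
      rw [← Function.iterate_add_apply]
      congr 1
      omega
    rw [h1, (Function.LeftInverse.iterate Φ.apply_symm_apply j) _]
  have hkret : retTime (⇑Φ) T ((⇑Φ.symm)^[k] w) = k := by
    apply le_antisymm
    · apply Nat.sInf_le
      refine ⟨hkspec.1, ?_⟩
      rw [hinv k le_rfl, Nat.sub_self, Function.iterate_zero_apply]
      exact hw
    · by_contra h
      push_neg at h
      have hmem : 1 ≤ retTime (⇑Φ) T ((⇑Φ.symm)^[k] w) ∧
          (⇑Φ)^[retTime (⇑Φ) T ((⇑Φ.symm)^[k] w)] ((⇑Φ.symm)^[k] w) ∈ T :=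
        Nat.sInf_mem (hRy ((⇑Φ.symm)^[k] w))
      rw [hinv _ (le_of_lt h)] at hmem
      have h1 := hmem.1
      exact retTime_min' (by omega) (by omega) hmem.2
  show (⇑Φ)^[retTime (⇑Φ) T ((⇑Φ.symm)^[k] w)] ((⇑Φ.symm)^[k] w) = w
  rw [hkret, hinv k le_rfl, Nat.sub_self, Function.iterate_zero_apply]

/-- The key single-step lemma. -/
lemma key_step (Φ : S ≃ₜ S) (hmin : Φ.IsMinimal) (A : ℕ → Set S)
    (hnested : ∀ n : ℕ, A (n + 1) ⊆ A n)
    (hclopen : ∀ n : ℕ, IsClopen (A n)) (hne : ∀ n : ℕ, (A n).Nonempty)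
    (n : ℕ) (B : Set S) (hB : B ⊆ A (n + 1)) :
    tMap (⇑Φ) A n '' {y ∈ A (n + 1) | indMap (⇑Φ) (A (n + 1)) y ∈ B}
      = {z ∈ A n | indMap (⇑Φ) (A n) z ∈ B} := by
  have hRn : ∀ x, {m : ℕ | 1 ≤ m ∧ (⇑Φ)^[m] x ∈ A n}.Nonempty :=
    exists_ret Φ hmin (hclopen n) (hne n)
  have hRn1 : ∀ x, {m : ℕ | 1 ≤ m ∧ (⇑Φ)^[m] x ∈ A (n + 1)}.Nonempty :=
    exists_ret Φ hmin (hclopen (n + 1)) (hne (n + 1))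
  have hii := retTime_ind hRn (hnested n) hRn1
  -- `F (t_n y) = Φ_{n+1} y`
  have hFt : ∀ y : S, indMap (⇑Φ) (A n) (tMap (⇑Φ) A n y) = indMap (⇑Φ) (A (n + 1)) y := by
    intro y
    have h1 : 1 ≤ retTime (indMap (⇑Φ) (A n)) (A (n + 1)) y := (Nat.sInf_mem (hii y).2).1
    have h2 : indMap (⇑Φ) (A n) (tMap (⇑Φ) A n y)
        = (indMap (⇑Φ) (A n))^[retTime (indMap (⇑Φ) (A n)) (A (n + 1)) y] y := by
      rw [tMap]
      conv_rhs => rw [show retTime (indMap (⇑Φ) (A n)) (A (n + 1)) y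
        = (retTime (indMap (⇑Φ) (A n)) (A (n + 1)) y - 1) + 1 from by omega,
        Function.iterate_succ_apply']
    rw [h2, ← (hii y).1]
    rfl
  have hmemF : ∀ y ∈ A n, ∀ m : ℕ, (indMap (⇑Φ) (A n))^[m] y ∈ A n := by
    intro y hy m
    induction m with
    | zero => exact hy
    | succ m ih => rw [Function.iterate_succ_apply']; exact indMap_mem' hRn _
  have htmem : ∀ y ∈ A (n + 1), tMap (⇑Φ) A n y ∈ A n := fun y hy =>
    hmemF y (hnested n hy) _
  have hinj : Set.InjOn (indMap (⇑Φ) (A n)) (A n) := indMap_injOn Φ.injective hRn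
  ext z
  constructor
  · rintro ⟨y, ⟨hy1, hy2⟩, rfl⟩
    exact ⟨htmem y hy1, by rw [hFt y]; exact hy2⟩
  · rintro ⟨hz1, hz2⟩
    obtain ⟨y, hy, hGy⟩ :=
      indMap_surjOn Φ hmin (hclopen (n + 1)) (hne (n + 1)) (hB hz2)
    refine ⟨y, ⟨hy, by rw [hGy]; exact hz2⟩, ?_⟩
    apply hinj (htmem y hy) hz1
    rw [hFt y, hGy]

end Topo

/-- Lemma `lemt`: `t_n ∘ ⋯ ∘ t_{n+k}(Φ_{n+k+1}⁻¹(S_{n+k+2})) = Φ_n⁻¹(S_{n+k+2})`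
(as subsets of the respective slices). -/
theorem tComp_image_eq {S : Type*} [TopologicalSpace S] [CompactSpace S]
    [TopologicalSpace.MetrizableSpace S] [TotallyDisconnectedSpace S] [Nonempty S]
    [PerfectSpace S]
    (Φ : S ≃ₜ S) (hmin : Φ.IsMinimal)
    (A : ℕ → Set S) (hA0 : A 0 = Set.univ)
    (hnested : ∀ n : ℕ, A (n + 1) ⊆ A n)
    (hclopen : ∀ n : ℕ, IsClopen (A n)) (hne : ∀ n : ℕ, (A n).Nonempty) :
    ∀ n k : ℕ,
      tComp (⇑Φ) A n k '' {y ∈ A (n + k + 1) | indMap (⇑Φ) (A (n + k + 1)) y ∈ A (n + k + 2)}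
        = {z ∈ A n | indMap (⇑Φ) (A n) z ∈ A (n + k + 2)} := by
  have hanti : Antitone A := antitone_nat_of_succ_le hnested
  intro n k
  induction k generalizing n with
  | zero =>
    simp only [tComp]
    exact key_step Φ hmin A hnested hclopen hne n (A (n + 2)) (hnested (n + 1))
  | succ k ih =>
    have hcomp : tComp (⇑Φ) A n (k + 1) = tMap (⇑Φ) A n ∘ tComp (⇑Φ) A (n + 1) k := rfl
    have e1 : n + 1 + k + 1 = n + (k + 1) + 1 := by omega
    have e2 : n + 1 + k + 2 = n + (k + 1) + 2 := by omega
    have ih' := ih (n + 1)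
    rw [e1, e2] at ih'
    rw [hcomp, Set.image_comp, ih']
    exact key_step Φ hmin A hnested hclopen hne n (A (n + (k + 1) + 2))
      (by have : n + 1 ≤ n + (k + 1) + 2 := by omega
          exact hanti this)
end

section
/- Let X be a compact metric space, φ a free minimal flow on X, and let S be the central slice of a flowbox with nonempty interior. Then for every x ∈ X the set R(x) = {t > 0 : φ_t(x) ∈ S} is nonempty and has a minimum (which is strictly positive); consequently the first arrive time τ_S(x) = min{t > 0 : φ_t(x) ∈ S} and the first return map Φ_S(x) = φ_{τ_S(x)}(x) ∈ S are well defined on all of X. -/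
open Set

private lemma sliceStruct {X : Type*} [TopologicalSpace X] (φ : Flow ℝ X) {B : Set X} {l : ℝ}
    (hB : IsFlowbox φ B l) {y : X} (hy : y ∈ centralSlice φ B) :
    (∀ t ∈ Set.Icc (-(l/2)) (l/2), φ t y ∈ B) ∧
    ∃ ε : ℝ, 0 < ε ∧
      ∀ t ∈ Set.Ioo (-(l/2) - ε) (-(l/2)) ∪ Set.Ioo (l/2) (l/2 + ε), φ t y ∉ B := by
  obtain ⟨hyB, a, ha0, haIn, ε₁, hε₁, haOut⟩ := hy
  obtain ⟨am, ap, ε₂, ham, hap, hε₂, hlap, hIn, hOut⟩ := hB.2.2 y hyB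
  have hapa : ap = a := by
    rcases lt_trichotomy ap a with h | h | h
    · exfalso
      set t := min ((ap + a)/2) (ap + ε₂/2) with ht
      have h1 : ap < t := lt_min (by linarith) (by linarith)
      have h2 : t < a := lt_of_le_of_lt (min_le_left _ _) (by linarith)
      have h3 : t < ap + ε₂ := lt_of_le_of_lt (min_le_right _ _) (by linarith)
      exact hOut t (Or.inr ⟨h1, h3⟩) (haIn t ⟨by linarith, h2.le⟩)
    · exact h
    · exfalso
      set t := min ((a + ap)/2) (a + ε₁/2) with ht
      have h1 : a < t := lt_min (by linarith) (by linarith)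
      have h2 : t < ap := lt_of_le_of_lt (min_le_left _ _) (by linarith)
      have h3 : t < a + ε₁ := lt_of_le_of_lt (min_le_right _ _) (by linarith)
      exact haOut t (Or.inr ⟨h1, h3⟩) (hIn t ⟨by linarith, h2.le⟩)
  have hama : am = -a := by
    rcases lt_trichotomy am (-a) with h | h | h
    · exfalso
      set t := max ((am + -a)/2) (-a - ε₁/2) with ht
      have h1 : am < t := lt_of_lt_of_le (by linarith) (le_max_left _ _)
      have h2 : t < -a := max_lt (by linarith) (by linarith)
      have h3 : -a - ε₁ < t := lt_of_lt_of_le (by linarith) (le_max_right _ _)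
      exact haOut t (Or.inl ⟨h3, h2⟩) (hIn t ⟨h1.le, by linarith⟩)
    · exact h
    · exfalso
      set t := max ((-a + am)/2) (am - ε₂/2) with ht
      have h1 : -a < t := lt_of_lt_of_le (by linarith) (le_max_left _ _)
      have h2 : t < am := max_lt (by linarith) (by linarith)
      have h3 : am - ε₂ < t := lt_of_lt_of_le (by linarith) (le_max_right _ _)
      exact hOut t (Or.inl ⟨h3, h2⟩) (haIn t ⟨h1.le, by linarith⟩)
  have hal : a = l/2 := by rw [hapa, hama] at hlap; linarith
  refine ⟨fun t ht => haIn t ⟨by rw [hal] at *; exact ht.1, by rw [hal]; exact ht.2⟩,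
    ε₁, hε₁, fun t ht => haOut t ?_⟩
  rcases ht with h | h
  · exact Or.inl ⟨by rw [hal]; exact h.1, by rw [hal]; exact h.2⟩
  · exact Or.inr ⟨by rw [hal]; exact h.1, by rw [hal]; exact h.2⟩

private lemma slice_sep {X : Type*} [TopologicalSpace X] (φ : Flow ℝ X) {B : Set X} {l : ℝ}
    (hB : IsFlowbox φ B l) {y : X} (hy : y ∈ centralSlice φ B) {s : ℝ} (hs : 0 < s)
    (hz : φ s y ∈ centralSlice φ B) : l < s := by
  by_contra h
  push_neg at h
  obtain ⟨hyIn, ε, hε, hyOut⟩ := sliceStruct φ hB hy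
  obtain ⟨hzIn, -⟩ := sliceStruct φ hB hz
  set t := l/2 + (min s ε)/2 with htdef
  have hmin' : 0 < min s ε := lt_min hs hε
  have h1 : l/2 < t := by linarith
  have h2 : t < l/2 + ε := by have := min_le_right s ε; linarith
  have h3 : t < s + l/2 := by have := min_le_left s ε; linarith
  have hmem : φ (t - s) (φ s y) ∈ B := hzIn (t - s) ⟨by linarith, by linarith⟩
  rw [← φ.map_add, sub_add_cancel] at hmem
  exact hyOut t (Or.inr ⟨h1, h2⟩) hmem

private lemma exists_arrive {X : Type*} [TopologicalSpace X] (φ : Flow ℝ X)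
    (hmin : φ.IsMinimal) {B : Set X} {l : ℝ} (hB : IsFlowbox φ B l)
    (hBint : (interior B).Nonempty) (x : X) :
    ∃ t : ℝ, 0 < t ∧ φ t x ∈ centralSlice φ B := by
  obtain ⟨-, hl, hbox⟩ := hB
  obtain ⟨w, hwB, t, ht0, hwt⟩ :=
    (hmin (φ l x)).inter_open_nonempty (interior B) isOpen_interior hBint
  have hwB' : w ∈ B := interior_subset hwB
  obtain ⟨am, ap, ε, ham, hap, hε, hlap, hIn, hOut⟩ := hbox w hwB'
  set c := (am + ap)/2 with hc
  have hamap : am ≤ ap := by linarith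
  have haml : -l ≤ am := by linarith
  have hzw : φ (t + l + c) x = φ c w := by
    have : t + l + c = c + (t + l) := by ring
    rw [this, φ.map_add]
    congr 1
    rw [show t + l = t + l from rfl, ← hwt, ← φ.map_add, add_comm]
  refine ⟨t + l + c, by simp only [hc]; linarith, ?_⟩
  rw [hzw]
  refine ⟨hIn c ⟨by simp only [hc]; linarith, by simp only [hc]; linarith⟩,
    l/2, by linarith, fun u hu => ?_, ε, hε, fun u hu => ?_⟩
  · have : φ u (φ c w) = φ (u + c) w := by rw [← φ.map_add]
    rw [this]
    exact hIn (u + c) ⟨by simp only [hc] at *; linarith [hu.1], by simp only [hc] at *; linarith [hu.2]⟩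
  · have heq : φ u (φ c w) = φ (u + c) w := by rw [← φ.map_add]
    rw [heq]
    rcases hu with h | h
    · exact hOut (u + c) (Or.inl ⟨by simp only [hc] at *; linarith [h.1], by simp only [hc] at *; linarith [h.2]⟩)
    · exact hOut (u + c) (Or.inr ⟨by simp only [hc] at *; linarith [h.1], by simp only [hc] at *; linarith [h.2]⟩)

/-- for a free minimal flow on a compact metric space and a central slice `S`
of a flowbox with nonempty interior, the set `{t > 0 | φ_t(x) ∈ S}` has a (strictly positive)
minimum for every `x`, so the first arrive time and the first return map are well defined. -/
theorem firstArriveTime_isLeast {X : Type*} [MetricSpace X] [CompactSpace X]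
    (φ : Flow ℝ X) (hfree : φ.IsFree) (hmin : φ.IsMinimal)
    (B : Set X) (l : ℝ) (hB : IsFlowbox φ B l) (hBint : (interior B).Nonempty)
    (S : Set X) (hS : S = centralSlice φ B) :
    ∀ x : X,
      IsLeast {t : ℝ | 0 < t ∧ φ t x ∈ S} (firstArriveTime φ S x) ∧
      0 < firstArriveTime φ S x ∧
      firstReturnMap φ S x ∈ S := by
  subst hS
  intro x
  have hl : 0 < l := hB.2.1
  set R := {t : ℝ | 0 < t ∧ φ t x ∈ centralSlice φ B} with hR
  have hRne : R.Nonempty := exists_arrive φ hmin hB hBint x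
  have hbdd : BddBelow R := ⟨0, fun t ht => ht.1.le⟩
  obtain ⟨s, hsR, hs⟩ := Real.lt_sInf_add_pos hRne (half_pos hl)
  have hleast : IsLeast R s := by
    refine ⟨hsR, fun t ht => ?_⟩
    by_contra hlt
    push_neg at hlt
    have h1 : φ (s - t) (φ t x) ∈ centralSlice φ B := by
      rw [← φ.map_add, sub_add_cancel]; exact hsR.2
    have h2 : l < s - t := slice_sep φ hB ht.2 (by linarith) h1
    have h3 : sInf R ≤ t := csInf_le hbdd ht
    linarith
  have hinf : sInf R = s := hleast.csInf_eq
  have hfa : firstArriveTime φ (centralSlice φ B) x = s := by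
    rw [firstArriveTime, ← hR, hinf]
  refine ⟨?_, ?_, ?_⟩
  · rw [hfa]; exact hleast
  · rw [hfa]; exact hsR.1
  · rw [firstReturnMap, hfa]; exact hsR.2
end
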